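/- arXiv:1701.05806 — 3 statements merged into one kernel-verified Lean document; each statement's English description precedes it below -/
import Mathlib

section
/- In GP(n,k) with n > 80 and 1 ≤ k < n/2, there exists an 8-cycle using exactly one outer edge, two spokes, and five inner edges if and only if 5k ≡ 1 (mod n) or 5k ≡ -1 (mod n). -/
open SimpleGraph

/-- The generalized Petersen graph `GP(n,k)`: vertices `Sum.inl i = uᵢ` (outer) and
`Sum.inr i = vᵢ` (inner), with edges `uᵢuᵢ₊₁`, `uᵢvᵢ`, `vᵢvᵢ₊ₖ` (indices mod `n`). -/
def GP (n k : ℕ) : SimpleGraph (ZMod n ⊕ ZMod n) :=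
  SimpleGraph.fromRel (fun a b => ∃ i : ZMod n,
    (a = Sum.inl i ∧ b = Sum.inl (i + 1)) ∨
    (a = Sum.inl i ∧ b = Sum.inr i) ∨
    (a = Sum.inr i ∧ b = Sum.inr (i + (k : ZMod n))))

/-- Outer-rim edges `uᵢuᵢ₊₁`. -/
def outerEdges (n : ℕ) : Set (Sym2 (ZMod n ⊕ ZMod n)) :=
  {e | ∃ i : ZMod n, e = s(Sum.inl i, Sum.inl (i + 1))}

/-- Spoke edges `uᵢvᵢ`. -/
def spokeEdges (n : ℕ) : Set (Sym2 (ZMod n ⊕ ZMod n)) :=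
  {e | ∃ i : ZMod n, e = s(Sum.inl i, Sum.inr i)}

/-- Inner-rim edges `vᵢvᵢ₊ₖ`. -/
def innerEdges (n k : ℕ) : Set (Sym2 (ZMod n ⊕ ZMod n)) :=
  {e | ∃ i : ZMod n, e = s(Sum.inr i, Sum.inr (i + (k : ZMod n)))}

/-- The subgraph of `G` spanned by the edges of `G` lying in the edge set `s`. -/
def edgeSubgraph {V : Type*} (G : SimpleGraph V) (s : Set (Sym2 V)) : G.Subgraph where
  verts := {v | ∃ e ∈ s ∩ G.edgeSet, v ∈ e}
  Adj a b := G.Adj a b ∧ s(a, b) ∈ s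
  adj_sub h := h.1
  edge_vert {a b} h := ⟨s(a, b), ⟨h.2, (SimpleGraph.mem_edgeSet G).mpr h.1⟩, Sym2.mem_mk_left _ _⟩
  symm := ⟨fun a b h => ⟨h.1.symm, by rw [Sym2.eq_swap]; exact h.2⟩⟩

/-- `C` is a cycle (subgraph) of length `m`: it has `m` vertices, `m` edges, is connected,
and every one of its vertices has exactly two neighbours in it. -/
def IsNCycle {V : Type*} {G : SimpleGraph V} (m : ℕ) (C : G.Subgraph) : Prop :=
  C.verts.ncard = m ∧ C.edgeSet.ncard = m ∧ C.Connected ∧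
    ∀ v ∈ C.verts, (C.neighborSet v).ncard = 2

/-- `sigma8 G e` is the number of 8-cycles of `G` containing the edge `e`. -/
noncomputable def sigma8 {V : Type*} (G : SimpleGraph V) (e : Sym2 V) : ℕ :=
  {C : G.Subgraph | IsNCycle 8 C ∧ e ∈ C.edgeSet}.ncard


open Sum

set_option maxHeartbeats 1000000

lemma cast_ne_zero' {n : ℕ} (j : ℕ) (h1 : 0 < j) (h2 : j < n) : (j : ZMod n) ≠ 0 := by
  intro h
  rw [ZMod.natCast_eq_zero_iff] at h
  exact absurd (Nat.le_of_dvd h1 h) (by omega)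

lemma gp_adj {n k : ℕ} {a b : ZMod n ⊕ ZMod n} : (GP n k).Adj a b ↔ a ≠ b ∧
    ((∃ i : ZMod n, (a = Sum.inl i ∧ b = Sum.inl (i + 1)) ∨
    (a = Sum.inl i ∧ b = Sum.inr i) ∨
    (a = Sum.inr i ∧ b = Sum.inr (i + (k : ZMod n)))) ∨
    (∃ i : ZMod n, (b = Sum.inl i ∧ a = Sum.inl (i + 1)) ∨
    (b = Sum.inl i ∧ a = Sum.inr i) ∨
    (b = Sum.inr i ∧ a = Sum.inr (i + (k : ZMod n))))) := by
  rw [GP, fromRel_adj]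

lemma adjS {n k : ℕ} (x y : ZMod n) (hy : y = x) : (GP n k).Adj (inl x) (inr y) := by
  rw [gp_adj]
  exact ⟨by simp, Or.inl ⟨x, Or.inr (Or.inl ⟨rfl, by rw [hy]⟩)⟩⟩

lemma adjI {n k : ℕ} (hK : (k : ZMod n) ≠ 0) (x y : ZMod n) (hy : y = x + (k : ZMod n)) :
    (GP n k).Adj (inr x) (inr y) := by
  rw [gp_adj]
  refine ⟨?_, Or.inl ⟨x, Or.inr (Or.inr ⟨rfl, by rw [hy]⟩)⟩⟩
  simp only [ne_eq, inr.injEq]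
  intro h; apply hK; rw [hy] at h; linear_combination -h

lemma adjO {n k : ℕ} (h1 : (1 : ZMod n) ≠ 0) (x y : ZMod n) (hy : y = x + 1) :
    (GP n k).Adj (inl x) (inl y) := by
  rw [gp_adj]
  refine ⟨?_, Or.inl ⟨x, Or.inl ⟨rfl, by rw [hy]⟩⟩⟩
  simp only [ne_eq, inl.injEq]
  intro h; apply h1; rw [hy] at h; linear_combination -h


lemma backward (n k : ℕ) (hn : 80 < n) (hk1 : 1 ≤ k) (hk2 : 2 * k < n)
    (he : ((5 * k : ℕ) : ZMod n) = 1 ∨ ((5 * k : ℕ) : ZMod n) = -1) :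
    ∃ C : (GP n k).Subgraph, IsNCycle 8 C ∧
        (C.edgeSet ∩ outerEdges n).ncard = 1 ∧
        (C.edgeSet ∩ spokeEdges n).ncard = 2 ∧
        (C.edgeSet ∩ innerEdges n k).ncard = 5 := by
  haveI : NeZero n := ⟨by omega⟩
  set K : ZMod n := (k : ZMod n) with hKdef
  set c : ℕ → ZMod n := fun j => (j : ZMod n) * K with hcdef
  have h1 : (1 : ZMod n) ≠ 0 := by
    have := cast_ne_zero' (n := n) 1 (by omega) (by omega); simpa using this
  have hK : K ≠ 0 := by
    have := cast_ne_zero' (n := n) k (by omega) (by omega); simpa using this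
  have hjk : ∀ j : ℕ, 0 < j → j ≤ 5 → (j : ZMod n) * K ≠ 0 := by
    intro j hj hj5 h0
    have h5 : ((5 * k : ℕ) : ZMod n) = 5 * K := by push_cast; ring
    have hj0 : (j : ZMod n) = 0 := by
      rcases he with he | he
      · calc (j : ZMod n) = (j : ZMod n) * ((5 * k : ℕ) : ZMod n) := by rw [he, mul_one]
          _ = 5 * ((j : ZMod n) * K) := by rw [h5]; ring
          _ = 0 := by rw [h0, mul_zero]
      · calc (j : ZMod n) = -((j : ZMod n) * ((5 * k : ℕ) : ZMod n)) := by rw [he]; ring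
          _ = -(5 * ((j : ZMod n) * K)) := by rw [h5]; ring
          _ = 0 := by rw [h0]; ring
    exact cast_ne_zero' j hj (by omega) hj0
  have hcc : ∀ i j : ℕ, i < j → j ≤ 5 → c i ≠ c j := by
    intro i j hij hj5 h
    apply hjk (j - i) (by omega) (by omega)
    have : ((j - i : ℕ) : ZMod n) = (j : ZMod n) - (i : ZMod n) := by
      have := Nat.cast_sub (R := ZMod n) (le_of_lt hij); rw [this]
    rw [this, sub_mul]
    simp only [hcdef] at h
    rw [← h]; ring
  have hc0 : c 0 = 0 := by simp [hcdef]
  have hc5 : c 5 = ((5 * k : ℕ) : ZMod n) := by simp only [hcdef]; push_cast; ring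
  have hc50 : c 5 ≠ 0 := by
    have := hjk 5 (by omega) (le_refl 5); simpa [hcdef] using this
  -- distinctness instances
  have d01 := hcc 0 1 (by omega) (by omega)
  have d02 := hcc 0 2 (by omega) (by omega)
  have d03 := hcc 0 3 (by omega) (by omega)
  have d04 := hcc 0 4 (by omega) (by omega)
  have d05 := hcc 0 5 (by omega) (by omega)
  have d12 := hcc 1 2 (by omega) (by omega)
  have d13 := hcc 1 3 (by omega) (by omega)
  have d14 := hcc 1 4 (by omega) (by omega)
  have d15 := hcc 1 5 (by omega) (by omega)
  have d23 := hcc 2 3 (by omega) (by omega)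
  have d24 := hcc 2 4 (by omega) (by omega)
  have d25 := hcc 2 5 (by omega) (by omega)
  have d34 := hcc 3 4 (by omega) (by omega)
  have d35 := hcc 3 5 (by omega) (by omega)
  have d45 := hcc 4 5 (by omega) (by omega)
  have hs1 : c 1 = c 0 + K := by simp only [hcdef]; push_cast; ring
  have hs2 : c 2 = c 1 + K := by simp only [hcdef]; push_cast; ring
  have hs3 : c 3 = c 2 + K := by simp only [hcdef]; push_cast; ring
  have hs4 : c 4 = c 3 + K := by simp only [hcdef]; push_cast; ring
  have hs5 : c 5 = c 4 + K := by simp only [hcdef]; push_cast; ring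
  -- the walk
  have houter : (GP n k).Adj (inl (c 5)) (inl 0) := by
    rcases he with he' | he'
    · exact (adjO h1 0 (c 5) (by rw [hc5, he', zero_add])).symm
    · exact adjO h1 (c 5) 0 (by rw [hc5, he']; ring)
  let w : (GP n k).Walk (inl 0) (inl 0) :=
    .cons (adjS 0 (c 0) hc0)
      (.cons (adjI hK (c 0) (c 1) hs1)
        (.cons (adjI hK (c 1) (c 2) hs2)
          (.cons (adjI hK (c 2) (c 3) hs3)
            (.cons (adjI hK (c 3) (c 4) hs4)
              (.cons (adjI hK (c 4) (c 5) hs5)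
                (.cons ((adjS (c 5) (c 5) rfl).symm)
                  (.cons houter .nil)))))))
  obtain ⟨C, hconn, hverts, hedges⟩ :
      ∃ C : (GP n k).Subgraph, C.Connected ∧
        C.verts = {inl 0, inl (c 5), inr (c 0), inr (c 1), inr (c 2), inr (c 3), inr (c 4),
          inr (c 5)} ∧
        C.edgeSet = {s(inl 0, inr (c 0)), s(inr (c 0), inr (c 1)), s(inr (c 1), inr (c 2)),
          s(inr (c 2), inr (c 3)), s(inr (c 3), inr (c 4)), s(inr (c 4), inr (c 5)),
          s(inr (c 5), inl (c 5)), s(inl (c 5), inl 0)} := by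
    refine ⟨w.toSubgraph, w.toSubgraph_connected, ?_, ?_⟩
    · ext x
      simp only [Walk.verts_toSubgraph, Set.mem_setOf_eq, Walk.support_cons, Walk.support_nil,
        List.mem_cons, List.mem_singleton, Set.mem_insert_iff, Set.mem_singleton_iff, w]
      tauto
    · ext e
      simp only [Walk.edgeSet_toSubgraph, Walk.mem_edgeSet, Set.mem_setOf_eq, Walk.edges_cons, Walk.edges_nil,
        List.mem_cons, List.not_mem_nil, or_false, Set.mem_insert_iff, Set.mem_singleton_iff, w]
  clear_value w
  clear w
  -- reversed distinctness
  have r01 := d01.symm; have r02 := d02.symm; have r03 := d03.symm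
  have r04 := d04.symm; have r05 := d05.symm; have r12 := d12.symm
  have r13 := d13.symm; have r14 := d14.symm; have r15 := d15.symm
  have r23 := d23.symm; have r24 := d24.symm; have r25 := d25.symm
  have r34 := d34.symm; have r35 := d35.symm; have r45 := d45.symm
  have hc50' : (0 : ZMod n) ≠ c 5 := fun h => hc50 h.symm
  have hAdj : ∀ x y, C.Adj x y ↔ s(x, y) ∈
      ({s(inl 0, inr (c 0)), s(inr (c 0), inr (c 1)), s(inr (c 1), inr (c 2)),
       s(inr (c 2), inr (c 3)), s(inr (c 3), inr (c 4)), s(inr (c 4), inr (c 5)),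
       s(inr (c 5), inl (c 5)), s(inl (c 5), inl 0)} : Set (Sym2 (ZMod n ⊕ ZMod n))) := by
    intro x y; rw [← Subgraph.mem_edgeSet, hedges]
  refine ⟨C, ⟨?_, ?_, hconn, ?_⟩, ?_, ?_, ?_⟩
  · rw [hverts,
      Set.ncard_insert_of_notMem (by simp [hc50']),
      Set.ncard_insert_of_notMem (by simp),
      Set.ncard_insert_of_notMem (by simp [d01, d02, d03, d04, d05]),
      Set.ncard_insert_of_notMem (by simp [d12, d13, d14, d15]),
      Set.ncard_insert_of_notMem (by simp [d23, d24, d25]),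
      Set.ncard_insert_of_notMem (by simp [d34, d35]),
      Set.ncard_insert_of_notMem (by simp [d45]),
      Set.ncard_singleton]
  · rw [hedges,
      Set.ncard_insert_of_notMem (by simp [Sym2.eq_iff, hc50']),
      Set.ncard_insert_of_notMem (by
        simp [Sym2.eq_iff, d01, d02, d03, d04, d05, r01, r02, r03, r04, r05]),
      Set.ncard_insert_of_notMem (by
        simp [Sym2.eq_iff, d12, d13, d14, d15, r12, r13, r14, r15]),
      Set.ncard_insert_of_notMem (by
        simp [Sym2.eq_iff, d23, d24, d25, r23, r24, r25]),
      Set.ncard_insert_of_notMem (by simp [Sym2.eq_iff, d34, d35, r34, r35]),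
      Set.ncard_insert_of_notMem (by simp [Sym2.eq_iff, d45, r45]),
      Set.ncard_insert_of_notMem (by simp [Sym2.eq_iff]),
      Set.ncard_singleton]
  · intro v hv
    rw [hverts] at hv
    simp only [Set.mem_insert_iff, Set.mem_singleton_iff] at hv
    rcases hv with rfl | rfl | rfl | rfl | rfl | rfl | rfl | rfl
    · have hN : C.neighborSet (inl 0) = {inr (c 0), inl (c 5)} := by
        ext z
        simp [Subgraph.mem_neighborSet, hAdj, Sym2.eq_iff, hc50', hc50]
      rw [hN, Set.ncard_pair (by simp)]
    · have hN : C.neighborSet (inl (c 5)) = {inr (c 5), inl 0} := by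
        ext z
        simp [Subgraph.mem_neighborSet, hAdj, Sym2.eq_iff, hc50', hc50]
      rw [hN, Set.ncard_pair (by simp)]
    · have hN : C.neighborSet (inr (c 0)) = {inl 0, inr (c 1)} := by
        ext z
        simp [Subgraph.mem_neighborSet, hAdj, Sym2.eq_iff, d01, d02, d03, d04, d05,
          r01, r02, r03, r04, r05]
      rw [hN, Set.ncard_pair (by simp)]
    · have hN : C.neighborSet (inr (c 1)) = {inr (c 0), inr (c 2)} := by
        ext z
        simp [Subgraph.mem_neighborSet, hAdj, Sym2.eq_iff, d12, d13, d14, d15,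
          r01, r12, r13, r14, r15]
      rw [hN, Set.ncard_pair (by simp [d02])]
    · have hN : C.neighborSet (inr (c 2)) = {inr (c 1), inr (c 3)} := by
        ext z
        simp [Subgraph.mem_neighborSet, hAdj, Sym2.eq_iff, d23, d24, d25,
          r02, r12, r23, r24, r25]
      rw [hN, Set.ncard_pair (by simp [d13])]
    · have hN : C.neighborSet (inr (c 3)) = {inr (c 2), inr (c 4)} := by
        ext z
        simp [Subgraph.mem_neighborSet, hAdj, Sym2.eq_iff, d34, d35,
          r03, r13, r23, r34, r35]
      rw [hN, Set.ncard_pair (by simp [d24])]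
    · have hN : C.neighborSet (inr (c 4)) = {inr (c 3), inr (c 5)} := by
        ext z
        simp [Subgraph.mem_neighborSet, hAdj, Sym2.eq_iff, d45,
          r04, r14, r24, r34, r45]
      rw [hN, Set.ncard_pair (by simp [d35])]
    · have hN : C.neighborSet (inr (c 5)) = {inr (c 4), inl (c 5)} := by
        ext z
        simp [Subgraph.mem_neighborSet, hAdj, Sym2.eq_iff,
          r05, r15, r25, r35, r45]
      rw [hN, Set.ncard_pair (by simp)]
  · have : C.edgeSet ∩ outerEdges n = {s(inl (c 5), inl 0)} := by
      ext e
      simp only [hedges, Set.mem_inter_iff, Set.mem_insert_iff, Set.mem_singleton_iff,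
        outerEdges, Set.mem_setOf_eq]
      constructor
      · rintro ⟨h8, i, hi⟩
        rcases h8 with rfl | rfl | rfl | rfl | rfl | rfl | rfl | rfl
        · exact absurd hi (by simp [Sym2.eq_iff])
        · exact absurd hi (by simp [Sym2.eq_iff])
        · exact absurd hi (by simp [Sym2.eq_iff])
        · exact absurd hi (by simp [Sym2.eq_iff])
        · exact absurd hi (by simp [Sym2.eq_iff])
        · exact absurd hi (by simp [Sym2.eq_iff])
        · exact absurd hi (by simp [Sym2.eq_iff])
        · rfl
      · rintro rfl
        refine ⟨Or.inr (Or.inr (Or.inr (Or.inr (Or.inr (Or.inr (Or.inr (rfl))))))), ?_⟩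
        rcases he with he' | he'
        · exact ⟨0, by rw [Sym2.eq_swap]; congr 2; rw [hc5, he', zero_add]⟩
        · exact ⟨c 5, by congr 2; rw [hc5, he']; ring⟩
    rw [this, Set.ncard_singleton]
  · have : C.edgeSet ∩ spokeEdges n =
        {s(inl 0, inr (c 0)), s(inr (c 5), inl (c 5))} := by
      ext e
      simp only [hedges, Set.mem_inter_iff, Set.mem_insert_iff, Set.mem_singleton_iff,
        spokeEdges, Set.mem_setOf_eq]
      constructor
      · rintro ⟨h8, i, hi⟩
        rcases h8 with rfl | rfl | rfl | rfl | rfl | rfl | rfl | rfl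
        · exact Or.inl rfl
        · exact absurd hi (by simp [Sym2.eq_iff])
        · exact absurd hi (by simp [Sym2.eq_iff])
        · exact absurd hi (by simp [Sym2.eq_iff])
        · exact absurd hi (by simp [Sym2.eq_iff])
        · exact absurd hi (by simp [Sym2.eq_iff])
        · exact Or.inr rfl
        · exact absurd hi (by simp [Sym2.eq_iff])
      · rintro (rfl | rfl)
        · exact ⟨Or.inl rfl, 0, by rw [hc0]⟩
        · exact ⟨Or.inr (Or.inr (Or.inr (Or.inr (Or.inr (Or.inr (Or.inl rfl)))))), c 5, by rw [Sym2.eq_swap]⟩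
    rw [this, Set.ncard_pair (by simp [Sym2.eq_iff, hc50'])]
  · have : C.edgeSet ∩ innerEdges n k =
        {s(inr (c 0), inr (c 1)), s(inr (c 1), inr (c 2)), s(inr (c 2), inr (c 3)),
         s(inr (c 3), inr (c 4)), s(inr (c 4), inr (c 5))} := by
      ext e
      simp only [hedges, Set.mem_inter_iff, Set.mem_insert_iff, Set.mem_singleton_iff,
        innerEdges, Set.mem_setOf_eq]
      constructor
      · rintro ⟨h8, i, hi⟩
        rcases h8 with rfl | rfl | rfl | rfl | rfl | rfl | rfl | rfl
        · exact absurd hi (by simp [Sym2.eq_iff])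
        · exact Or.inl rfl
        · exact Or.inr (Or.inl rfl)
        · exact Or.inr (Or.inr (Or.inl rfl))
        · exact Or.inr (Or.inr (Or.inr (Or.inl rfl)))
        · exact Or.inr (Or.inr (Or.inr (Or.inr rfl)))
        · exact absurd hi (by simp [Sym2.eq_iff])
        · exact absurd hi (by simp [Sym2.eq_iff])
      · rintro (rfl | rfl | rfl | rfl | rfl)
        · exact ⟨Or.inr (Or.inl rfl), c 0, by rw [hs1]⟩
        · exact ⟨Or.inr (Or.inr (Or.inl rfl)), c 1, by rw [hs2]⟩
        · exact ⟨Or.inr (Or.inr (Or.inr (Or.inl rfl))), c 2, by rw [hs3]⟩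
        · exact ⟨Or.inr (Or.inr (Or.inr (Or.inr (Or.inl rfl)))), c 3, by rw [hs4]⟩
        · exact ⟨Or.inr (Or.inr (Or.inr (Or.inr (Or.inr (Or.inl rfl))))), c 4, by rw [hs5]⟩
    rw [this,
      Set.ncard_insert_of_notMem (by
        simp [Sym2.eq_iff, d01, d02, d03, d04, d05, r01, r02, r03, r04, r05,
          d12, d13, d14, d15]),
      Set.ncard_insert_of_notMem (by
        simp [Sym2.eq_iff, d12, d13, d14, d15, r12, r13, r14, r15, d23, d24, d25]),
      Set.ncard_insert_of_notMem (by
        simp [Sym2.eq_iff, d23, d24, d25, r23, r24, r25, d34, d35]),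
      Set.ncard_insert_of_notMem (by simp [Sym2.eq_iff, d34, d35, r34, r35, d45]),
      Set.ncard_singleton]

lemma forward (n k : ℕ) (hn : 80 < n) (hk1 : 1 ≤ k) (hk2 : 2 * k < n)
    (C : (GP n k).Subgraph) (hcyc : IsNCycle 8 C)
    (ho : (C.edgeSet ∩ outerEdges n).ncard = 1)
    (hs : (C.edgeSet ∩ spokeEdges n).ncard = 2)
    (hi : (C.edgeSet ∩ innerEdges n k).ncard = 5) :
    ((5 * k : ℕ) : ZMod n) = 1 ∨ ((5 * k : ℕ) : ZMod n) = -1 := by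
  haveI : NeZero n := ⟨by omega⟩
  obtain ⟨hv8, he8, hconn, hdeg⟩ := hcyc
  have h1 : (1 : ZMod n) ≠ 0 := by
    have := cast_ne_zero' (n := n) 1 (by omega) (by omega); simpa using this
  have h2 : (1 : ZMod n) + 1 ≠ 0 := by
    have := cast_ne_zero' (n := n) 2 (by omega) (by omega)
    intro h; apply this; push_cast; rw [← h]; ring
  have hK : (k : ZMod n) ≠ 0 := by
    have := cast_ne_zero' (n := n) k (by omega) (by omega); simpa using this
  have h2K : (k : ZMod n) + (k : ZMod n) ≠ 0 := by
    have := cast_ne_zero' (n := n) (2 * k) (by omega) (by omega)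
    intro h; apply this; push_cast; rw [← h]; ring
  -- the unique outer edge
  obtain ⟨eo, heo⟩ := Set.ncard_eq_one.mp ho
  have heo_mem : eo ∈ C.edgeSet ∩ outerEdges n := by rw [heo]; rfl
  obtain ⟨a, ha⟩ := heo_mem.2
  have hoE : s(inl a, inl (a + 1)) ∈ C.edgeSet := by rw [← ha]; exact heo_mem.1
  have houter_unique : ∀ x : ZMod n, s(inl x, inl (x + 1)) ∈ C.edgeSet → x = a := by
    intro x hx
    have hx2 : s(inl x, inl (x + 1)) ∈ C.edgeSet ∩ outerEdges n := ⟨hx, x, rfl⟩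
    rw [heo, Set.mem_singleton_iff, ha, Sym2.eq_iff] at hx2
    rcases hx2 with ⟨hxa, -⟩ | ⟨hxa, hxb⟩
    · exact Sum.inl_injective hxa
    · exfalso
      have hp := Sum.inl_injective hxa
      have hq := Sum.inl_injective hxb
      apply h2; linear_combination hq - hp
  -- the two spokes
  obtain ⟨f1, f2, hf12, hfs⟩ := Set.ncard_eq_two.mp hs
  have hf1mem : f1 ∈ C.edgeSet ∩ spokeEdges n := by rw [hfs]; left; rfl
  have hf2mem : f2 ∈ C.edgeSet ∩ spokeEdges n := by rw [hfs]; right; rfl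
  obtain ⟨b, hb⟩ := hf1mem.2
  obtain ⟨c, hc⟩ := hf2mem.2
  have hbE : s(inl b, inr b) ∈ C.edgeSet := by rw [← hb]; exact hf1mem.1
  have hcE : s(inl c, inr c) ∈ C.edgeSet := by rw [← hc]; exact hf2mem.1
  have hbc : b ≠ c := by rintro rfl; exact hf12 (hb.trans hc.symm)
  -- every spoke of C sits at a or a+1
  have key : ∀ x : ZMod n, s(inl x, inr x) ∈ C.edgeSet → x = a ∨ x = a + 1 := by
    intro x hx
    by_contra hcon
    push_neg at hcon
    have hadjx : C.Adj (inl x) (inr x) := Subgraph.mem_edgeSet.mp hx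
    have hxv : inl x ∈ C.verts := C.edge_vert hadjx
    have hsub : C.neighborSet (inl x) ⊆ {inr x} := by
      intro z hz
      have hadj : C.Adj (inl x) z := hz
      have hgp := C.adj_sub hadj
      rw [gp_adj] at hgp
      obtain ⟨-, hrel⟩ := hgp
      rcases hrel with ⟨i, hcase⟩ | ⟨i, hcase⟩
      · rcases hcase with ⟨hxi, hz'⟩ | ⟨hxi, hz'⟩ | ⟨hxi, -⟩
        · exfalso
          have hxi' := Sum.inl_injective hxi
          subst hxi'
          subst hz'
          exact hcon.1 (houter_unique x (Subgraph.mem_edgeSet.mpr hadj))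
        · have hxi' := Sum.inl_injective hxi
          subst hxi'; subst hz'; rfl
        · exact absurd hxi (by simp)
      · rcases hcase with ⟨hz', hxi⟩ | ⟨hz', hxi⟩ | ⟨hz', hxi⟩
        · exfalso
          subst hz'
          have hadj2 : C.Adj (inl i) (inl (i + 1)) := hxi ▸ hadj.symm
          have hia := houter_unique i (Subgraph.mem_edgeSet.mpr hadj2)
          subst hia
          exact hcon.2 (Sum.inl_injective hxi)
        · subst hz'
          exact absurd hxi (by simp)
        · exact absurd hxi (by simp)
    have hle : (C.neighborSet (inl x)).ncard ≤ 1 := by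
      have := Set.ncard_le_ncard hsub (Set.finite_singleton _)
      simpa using this
    rw [hdeg _ hxv] at hle
    omega
  have ha1 : a ≠ a + 1 := by intro h; apply h1; linear_combination -h
  have hSa : s(inl a, inr a) ∈ C.edgeSet ∧ s(inl (a + 1), inr (a + 1)) ∈ C.edgeSet := by
    rcases key b hbE with rfl | rfl
    · rcases key c hcE with rfl | rfl
      · exact absurd rfl hbc
      · exact ⟨hbE, hcE⟩
    · rcases key c hcE with rfl | rfl
      · exact ⟨hcE, hbE⟩
      · exact absurd rfl hbc
  -- pair lemma
  have pairN : ∀ x y z : ZMod n ⊕ ZMod n, x ∈ C.verts → y ≠ z → C.Adj x y → C.Adj x z →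
      C.neighborSet x = {y, z} := by
    intro x y z hxv hyz hy hz
    refine (Set.eq_of_subset_of_ncard_le ?_ ?_ (Set.toFinite _)).symm
    · intro w hw
      rcases hw with rfl | rfl
      · exact hy
      · exact hz
    · rw [hdeg _ hxv, Set.ncard_pair hyz]
  -- inner-vertex adjacency classification
  have hInnerSub : ∀ x : ZMod n, ∀ z, C.Adj (inr x) z →
      z = inl x ∨ z = inr (x + (k : ZMod n)) ∨ z = inr (x - (k : ZMod n)) := by
    intro x z hadj
    have hgp := C.adj_sub hadj
    rw [gp_adj] at hgp
    obtain ⟨-, hrel⟩ := hgp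
    rcases hrel with ⟨i, hcase⟩ | ⟨i, hcase⟩
    · rcases hcase with ⟨hxi, -⟩ | ⟨hxi, -⟩ | ⟨hxi, hz'⟩
      · exact absurd hxi (by simp)
      · exact absurd hxi (by simp)
      · have hxi' := Sum.inr_injective hxi
        subst hxi'
        exact Or.inr (Or.inl hz')
    · rcases hcase with ⟨hz', hxi⟩ | ⟨hz', hxi⟩ | ⟨hz', hxi⟩
      · exact absurd hxi (by simp)
      · have hxi' := Sum.inr_injective hxi
        subst hxi'
        exact Or.inl hz'
      · have hxi' := Sum.inr_injective hxi
        subst hz'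
        right; right
        congr 1
        rw [hxi']; ring
  have hInner : ∀ x : ZMod n, x ≠ a → x ≠ a + 1 → inr x ∈ C.verts →
      C.neighborSet (inr x) = {inr (x + (k : ZMod n)), inr (x - (k : ZMod n))} := by
    intro x hxa hxa1 hxv
    have hsub : C.neighborSet (inr x) ⊆ {inr (x + (k : ZMod n)), inr (x - (k : ZMod n))} := by
      intro z hz
      rcases hInnerSub x z hz with rfl | rfl | rfl
      · exfalso
        have : s(inl x, inr x) ∈ C.edgeSet := Subgraph.mem_edgeSet.mpr (hz : C.Adj _ _).symm
        rcases key x this with rfl | h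
        · exact hxa rfl
        · exact hxa1 h
      · exact Or.inl rfl
      · exact Or.inr rfl
    refine Set.eq_of_subset_of_ncard_le hsub ?_ (Set.toFinite _)
    rw [hdeg _ hxv, Set.ncard_pair]
    intro h
    have := Sum.inr_injective h
    apply h2K; linear_combination this
  -- the two neighbours of inr a
  have hava : inr a ∈ C.verts := C.edge_vert (Subgraph.mem_edgeSet.mp hSa.1).symm
  have hNva : ∃ d : ZMod n, (d = (k : ZMod n) ∨ d = -(k : ZMod n)) ∧
      C.neighborSet (inr a) = {inl a, inr (a + d)} := by
    have hspoke_in : C.Adj (inr a) (inl a) := (Subgraph.mem_edgeSet.mp hSa.1).symm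
    by_cases hka : C.Adj (inr a) (inr (a + (k : ZMod n)))
    · exact ⟨(k : ZMod n), Or.inl rfl, pairN _ _ _ hava (by simp) hspoke_in hka⟩
    · refine ⟨-(k : ZMod n), Or.inr rfl, ?_⟩
      have hsub : C.neighborSet (inr a) ⊆ {inl a, inr (a + -(k : ZMod n))} := by
        intro z hz
        rcases hInnerSub a z hz with rfl | rfl | rfl
        · exact Or.inl rfl
        · exact absurd (hz : C.Adj _ _) hka
        · right; simp [sub_eq_add_neg]
      refine (Set.eq_of_subset_of_ncard_le hsub ?_ (Set.toFinite _))
      rw [hdeg _ hava, Set.ncard_pair (by simp)]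
  obtain ⟨d, hd, hNva⟩ := hNva
  have hdne : d ≠ 0 := by
    rcases hd with rfl | rfl
    · exact hK
    · simpa using hK
  have h2d : d + d ≠ 0 := by
    rcases hd with rfl | rfl
    · exact h2K
    · intro h; apply h2K; linear_combination -h
  -- the forced inner path
  set T : ℕ → ZMod n := fun j => a + (j : ZMod n) * d with hTdef
  have hT0 : T 0 = a := by simp [hTdef]
  have hTs : ∀ j : ℕ, T (j + 1) = T j + d := by
    intro j; simp only [hTdef]; push_cast; ring
  have hchain : ∀ j : ℕ, (∀ l : ℕ, 1 ≤ l → l ≤ j → T l ≠ a ∧ T l ≠ a + 1) →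
      C.Adj (inr (T j)) (inr (T (j + 1))) := by
    intro j
    induction j with
    | zero =>
      intro _
      have : inr (T 1) ∈ C.neighborSet (inr a) := by
        rw [hNva]
        right
        rw [Set.mem_singleton_iff, hTs 0, hT0]
      rw [hT0]
      exact this
    | succ m IH =>
      intro hav
      have hprev : C.Adj (inr (T m)) (inr (T (m + 1))) :=
        IH (fun l h1 h2 => hav l h1 (by omega))
      have hvert : inr (T (m + 1)) ∈ C.verts := C.edge_vert hprev.symm
      have hne := hav (m + 1) (by omega) (le_refl _)
      have hN := hInner (T (m + 1)) hne.1 hne.2 hvert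
      rcases hd with rfl | rfl
      · have : inr (T (m + 1) + (k : ZMod n)) ∈ C.neighborSet (inr (T (m + 1))) := by
          rw [hN]; exact Or.inl rfl
        have h2' : C.Adj (inr (T (m + 1))) (inr (T (m + 1) + (k : ZMod n))) := this
        rwa [← hTs (m + 1)] at h2'
      · have : inr (T (m + 1) - (k : ZMod n)) ∈ C.neighborSet (inr (T (m + 1))) := by
          rw [hN]; exact Or.inr rfl
        have h2' : C.Adj (inr (T (m + 1))) (inr (T (m + 1) - (k : ZMod n))) := this
        have he' : T (m + 1) - (k : ZMod n) = T (m + 2) := by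
          rw [hTs (m + 1)]; ring
        rwa [he'] at h2'
  have hTeq : ∀ p q : ℕ, p < q → T p = T q → T (q - p) = a := by
    intro p q hpq h
    have hc : ((q - p : ℕ) : ZMod n) = (q : ZMod n) - (p : ZMod n) := by
      rw [Nat.cast_sub hpq.le]
    simp only [hTdef] at h ⊢
    rw [hc]
    linear_combination -h
  have hreturn : ∃ i : ℕ, 1 ≤ i ∧ i ≤ 5 ∧ (T i = a ∨ T i = a + 1) := by
    by_contra hcon
    push_neg at hcon
    have hfree : ∀ l : ℕ, 1 ≤ l → l ≤ 5 → T l ≠ a ∧ T l ≠ a + 1 := by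
      intro l h1 h2
      exact hcon l h1 h2
    have hE : ∀ j : ℕ, j ≤ 5 → s(inr (T j), inr (T (j + 1))) ∈ C.edgeSet ∩ innerEdges n k := by
      intro j hj
      have hadj := hchain j (fun l hl1 hl2 => hfree l hl1 (by omega))
      refine ⟨Subgraph.mem_edgeSet.mpr hadj, ?_⟩
      rcases hd with rfl | rfl
      · exact ⟨T j, by rw [hTs j]⟩
      · refine ⟨T (j + 1), ?_⟩
        rw [Sym2.eq_swap]
        congr 1
        rw [hTs j]; ring
    have hdist : ∀ p q : ℕ, p < q → q ≤ 5 →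
        (s(inr (T p), inr (T (p + 1))) : Sym2 (ZMod n ⊕ ZMod n)) ≠
          s(inr (T q), inr (T (q + 1))) := by
      intro p q hpq hq5 heq
      rw [Sym2.eq_iff] at heq
      rcases heq with ⟨h1', -⟩ | ⟨h1', h2'⟩
      · have := hTeq p q hpq (Sum.inr_injective h1')
        exact (hfree (q - p) (by omega) (by omega)).1 this
      · have e1 := Sum.inr_injective h1'
        have e2 := Sum.inr_injective h2'
        apply h2d
        simp only [hTdef] at e1 e2
        push_cast at e1 e2
        linear_combination e2 - e1
    have n01 := hdist 0 1 (by omega) (by omega)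
    have n02 := hdist 0 2 (by omega) (by omega)
    have n03 := hdist 0 3 (by omega) (by omega)
    have n04 := hdist 0 4 (by omega) (by omega)
    have n05 := hdist 0 5 (by omega) (by omega)
    have n12 := hdist 1 2 (by omega) (by omega)
    have n13 := hdist 1 3 (by omega) (by omega)
    have n14 := hdist 1 4 (by omega) (by omega)
    have n15 := hdist 1 5 (by omega) (by omega)
    have n23 := hdist 2 3 (by omega) (by omega)
    have n24 := hdist 2 4 (by omega) (by omega)
    have n25 := hdist 2 5 (by omega) (by omega)
    have n34 := hdist 3 4 (by omega) (by omega)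
    have n35 := hdist 3 5 (by omega) (by omega)
    have n45 := hdist 4 5 (by omega) (by omega)
    have hsub6 : ({s(inr (T 0), inr (T (0 + 1))), s(inr (T 1), inr (T (1 + 1))),
        s(inr (T 2), inr (T (2 + 1))), s(inr (T 3), inr (T (3 + 1))),
        s(inr (T 4), inr (T (4 + 1))), s(inr (T 5), inr (T (5 + 1)))} :
        Set (Sym2 (ZMod n ⊕ ZMod n))) ⊆ C.edgeSet ∩ innerEdges n k := by
      intro e he'
      rcases he' with rfl | rfl | rfl | rfl | rfl | rfl
      · exact hE 0 (by omega)
      · exact hE 1 (by omega)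
      · exact hE 2 (by omega)
      · exact hE 3 (by omega)
      · exact hE 4 (by omega)
      · exact hE 5 (by omega)
    have hcard6 : ({s(inr (T 0), inr (T (0 + 1))), s(inr (T 1), inr (T (1 + 1))),
        s(inr (T 2), inr (T (2 + 1))), s(inr (T 3), inr (T (3 + 1))),
        s(inr (T 4), inr (T (4 + 1))), s(inr (T 5), inr (T (5 + 1)))} :
        Set (Sym2 (ZMod n ⊕ ZMod n))).ncard = 6 := by
      rw [Set.ncard_insert_of_notMem (by simp [n01, n02, n03, n04, n05]),
        Set.ncard_insert_of_notMem (by simp [n12, n13, n14, n15]),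
        Set.ncard_insert_of_notMem (by simp [n23, n24, n25]),
        Set.ncard_insert_of_notMem (by simp [n34, n35]),
        Set.ncard_insert_of_notMem (by simp [n45]),
        Set.ncard_singleton]
    have hle6 := Set.ncard_le_ncard hsub6 (Set.toFinite _)
    rw [hi, hcard6] at hle6
    omega
  classical
  have hspec := Nat.find_spec hreturn
  set i := Nat.find hreturn with hidef
  obtain ⟨hi1, hi5, hiret⟩ := hspec
  have hno : ∀ l : ℕ, 1 ≤ l → l < i → T l ≠ a ∧ T l ≠ a + 1 := by
    intro l h1 h2
    have hm := Nat.find_min hreturn h2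
    push_neg at hm
    have hl5 : l ≤ 5 := by omega
    exact hm h1 hl5
  rcases hiret with hTa | hTa1
  · exfalso
    rcases Nat.lt_or_ge i 2 with hcase | hcase
    · have hie : i = 1 := by omega
      rw [hie] at hTa
      apply hdne
      simp only [hTdef] at hTa
      push_cast at hTa
      linear_combination hTa
    · have hadjl := hchain (i - 1) (fun l hl1 hl2 => hno l hl1 (by omega))
      rw [show i - 1 + 1 = i by omega, hTa] at hadjl
      have hmem : inr (T (i - 1)) ∈ C.neighborSet (inr a) := hadjl.symm
      rw [hNva] at hmem
      rcases hmem with h' | h'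
      · exact absurd h' (by simp)
      · have hTi1 : T (i - 1) = a - d := by
          have hts := hTs (i - 1)
          rw [show i - 1 + 1 = i by omega, hTa] at hts
          linear_combination -hts
        rw [Set.mem_singleton_iff, hTi1] at h'
        have hinj := Sum.inr_injective h'
        apply h2d
        linear_combination -hinj
  · rcases Nat.lt_or_ge i 5 with hlt | hge
    · exfalso
      have hva : inl a ∈ C.verts := C.edge_vert (Subgraph.mem_edgeSet.mp hoE)
      have hva1 : inl (a + 1) ∈ C.verts := C.edge_vert (Subgraph.mem_edgeSet.mp hoE).symm
      have hava1 : inr (a + 1) ∈ C.verts := C.edge_vert (Subgraph.mem_edgeSet.mp hSa.2).symm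
      have hNla : C.neighborSet (inl a) = {inl (a + 1), inr a} :=
        pairN _ _ _ hva (by simp) (Subgraph.mem_edgeSet.mp hoE) (Subgraph.mem_edgeSet.mp hSa.1)
      have hNla1 : C.neighborSet (inl (a + 1)) = {inl a, inr (a + 1)} :=
        pairN _ _ _ hva1 (by simp) (Subgraph.mem_edgeSet.mp hoE).symm
          (Subgraph.mem_edgeSet.mp hSa.2)
      have hadjlast : C.Adj (inr (T (i - 1))) (inr (a + 1)) := by
        have hcl := hchain (i - 1) (fun l hl1 hl2 => hno l hl1 (by omega))
        rwa [show i - 1 + 1 = i by omega, hTa1] at hcl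
      have hNra1 : C.neighborSet (inr (a + 1)) = {inl (a + 1), inr (T (i - 1))} :=
        pairN _ _ _ hava1 (by simp) (Subgraph.mem_edgeSet.mp hSa.2).symm hadjlast.symm
      set Q : Set (ZMod n ⊕ ZMod n) :=
        {x | x = inl a ∨ x = inl (a + 1) ∨ ∃ l : ℕ, l ≤ i ∧ x = inr (T l)} with hQdef
      have hQsmall : ∃ w' ∈ C.verts, w' ∉ Q := by
        by_contra hcon2
        push_neg at hcon2
        have hQsub : Q ⊆ {inl a, inl (a + 1), inr (T 0), inr (T 1), inr (T 2), inr (T 3),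
            inr (T 4)} := by
          intro x hx
          rcases hx with rfl | rfl | ⟨l, hl, rfl⟩
          · exact Or.inl rfl
          · exact Or.inr (Or.inl rfl)
          · have hl4 : l ≤ 4 := by omega
            interval_cases l
            · exact Or.inr (Or.inr (Or.inl rfl))
            · exact Or.inr (Or.inr (Or.inr (Or.inl rfl)))
            · exact Or.inr (Or.inr (Or.inr (Or.inr (Or.inl rfl))))
            · exact Or.inr (Or.inr (Or.inr (Or.inr (Or.inr (Or.inl rfl)))))
            · exact Or.inr (Or.inr (Or.inr (Or.inr (Or.inr (Or.inr rfl)))))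
        have hcard7 : ({inl a, inl (a + 1), inr (T 0), inr (T 1), inr (T 2), inr (T 3),
            inr (T 4)} : Set (ZMod n ⊕ ZMod n)).ncard ≤ 7 := by
          refine le_trans (Set.ncard_insert_le _ _) (Nat.add_le_add_right ?_ 1)
          refine le_trans (Set.ncard_insert_le _ _) (Nat.add_le_add_right ?_ 1)
          refine le_trans (Set.ncard_insert_le _ _) (Nat.add_le_add_right ?_ 1)
          refine le_trans (Set.ncard_insert_le _ _) (Nat.add_le_add_right ?_ 1)
          refine le_trans (Set.ncard_insert_le _ _) (Nat.add_le_add_right ?_ 1)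
          refine le_trans (Set.ncard_insert_le _ _) (Nat.add_le_add_right ?_ 1)
          rw [Set.ncard_singleton]
        have h8le : (8 : ℕ) ≤ Q.ncard := by
          rw [← hv8]
          exact Set.ncard_le_ncard (fun x hx => hcon2 x hx) (Set.toFinite _)
        have h7le := Set.ncard_le_ncard hQsub (Set.toFinite _)
        omega
      obtain ⟨w', hw'v, hw'Q⟩ := hQsmall
      have hclosed : ∀ x y, x ∈ Q → C.Adj x y → y ∈ Q := by
        intro x y hx hadj
        rcases hx with rfl | rfl | ⟨l, hl, rfl⟩
        · have hy : y ∈ C.neighborSet (inl a) := hadj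
          rw [hNla] at hy
          rcases hy with rfl | rfl
          · exact Or.inr (Or.inl rfl)
          · exact Or.inr (Or.inr ⟨0, by omega, by rw [hT0]⟩)
        · have hy : y ∈ C.neighborSet (inl (a + 1)) := hadj
          rw [hNla1] at hy
          rcases hy with rfl | rfl
          · exact Or.inl rfl
          · exact Or.inr (Or.inr ⟨i, le_refl _, by rw [hTa1]⟩)
        · by_cases hl0 : l = 0
          · subst hl0
            have hy : y ∈ C.neighborSet (inr a) := by rw [← hT0]; exact hadj
            rw [hNva] at hy
            rcases hy with rfl | rfl
            · exact Or.inl rfl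
            · exact Or.inr (Or.inr ⟨1, by omega, by rw [hTs 0, hT0]⟩)
          · rcases Nat.eq_or_lt_of_le hl with heq | hlt
            · subst heq
              have hy : y ∈ C.neighborSet (inr (a + 1)) := by rw [← hTa1]; exact hadj
              rw [hNra1] at hy
              rcases hy with rfl | rfl
              · exact Or.inr (Or.inl rfl)
              · exact Or.inr (Or.inr ⟨i - 1, by omega, rfl⟩)
            · have hvl : inr (T l) ∈ C.verts := C.edge_vert hadj
              have hnel := hno l (by omega) hlt
              have hN := hInner (T l) hnel.1 hnel.2 hvl
              have hy : y ∈ C.neighborSet (inr (T l)) := hadj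
              rw [hN] at hy
              rcases hy with rfl | rfl
              · rcases hd with rfl | rfl
                · exact Or.inr (Or.inr ⟨l + 1, by omega, by rw [hTs l]⟩)
                · refine Or.inr (Or.inr ⟨l - 1, by omega, ?_⟩)
                  have hts := hTs (l - 1)
                  rw [show l - 1 + 1 = l by omega] at hts
                  congr 1
                  rw [hts]; ring
              · rcases hd with rfl | rfl
                · refine Or.inr (Or.inr ⟨l - 1, by omega, ?_⟩)
                  have hts := hTs (l - 1)
                  rw [show l - 1 + 1 = l by omega] at hts
                  congr 1
                  rw [hts]; ring
                · refine Or.inr (Or.inr ⟨l + 1, by omega, ?_⟩)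
                  rw [hTs l]
                  congr 1
                  ring
      have hreach : ∀ (u v : C.verts) (p : C.coe.Walk u v),
          (u : ZMod n ⊕ ZMod n) ∈ Q → (v : ZMod n ⊕ ZMod n) ∈ Q := by
        intro u v p
        induction p with
        | nil => exact id
        | cons hadj p IH =>
          intro hu
          exact IH (hclosed _ _ hu hadj)
      obtain ⟨p⟩ := hconn.preconnected ⟨inl a, hva⟩ ⟨w', hw'v⟩
      exact hw'Q (hreach _ _ p (Or.inl rfl))
    · have hie : i = 5 := by omega
      rw [hie] at hTa1
      simp only [hTdef] at hTa1
      push_cast at hTa1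
      rcases hd with rfl | rfl
      · left
        push_cast
        linear_combination hTa1
      · right
        push_cast
        linear_combination -hTa1

theorem gp_C1_iff (n k : ℕ) (hn : 80 < n) (hk1 : 1 ≤ k) (hk2 : 2 * k < n) :
    (∃ C : (GP n k).Subgraph, IsNCycle 8 C ∧
        (C.edgeSet ∩ outerEdges n).ncard = 1 ∧
        (C.edgeSet ∩ spokeEdges n).ncard = 2 ∧
        (C.edgeSet ∩ innerEdges n k).ncard = 5) ↔
      ((5 * k : ℕ) : ZMod n) = 1 ∨ ((5 * k : ℕ) : ZMod n) = -1 := by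
  constructor
  · rintro ⟨C, hcyc, h1, h2, h3⟩
    exact forward n k hn hk1 hk2 C hcyc h1 h2 h3
  · exact backward n k hn hk1 hk2
end

section
/- In GP(n,k) with n > 80 and 1 ≤ k < n/2, there exists an 8-cycle using exactly four outer edges, two spokes, and two inner edges if and only if k = 2 or k = (n-4)/2 (the latter requiring n even). -/
open SimpleGraph

section Infra

open SimpleGraph Sum

variable {n k : ℕ}

lemma gp_adj_inl_inl {x y : ZMod n} :
    (GP n k).Adj (Sum.inl x) (Sum.inl y) ↔ x ≠ y ∧ (y = x + 1 ∨ x = y + 1) := by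
  simp [GP, fromRel_adj]

lemma gp_adj_inl_inr {x y : ZMod n} :
    (GP n k).Adj (Sum.inl x) (Sum.inr y) ↔ x = y := by
  simp [GP, fromRel_adj]
  tauto

lemma gp_adj_inr_inl {x y : ZMod n} :
    (GP n k).Adj (Sum.inr x) (Sum.inl y) ↔ x = y := by
  simp [GP, fromRel_adj]

lemma gp_adj_inr_inr {x y : ZMod n} :
    (GP n k).Adj (Sum.inr x) (Sum.inr y) ↔ x ≠ y ∧ (y = x + (k : ZMod n) ∨ x = y + (k : ZMod n)) := by
  simp [GP, fromRel_adj]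

lemma zmod_cast_inj (hn : 0 < n) {i j : ℕ} (hi : i < n) (hj : j < n)
    (h : (i : ZMod n) = (j : ZMod n)) : i = j := by
  haveI : NeZero n := ⟨by omega⟩
  have h2 := congrArg ZMod.val h
  rwa [ZMod.val_cast_of_lt hi, ZMod.val_cast_of_lt hj] at h2

lemma zmod_cast_ne (hn : 0 < n) {i j : ℕ} (hi : i < n) (hj : j < n) (hij : i ≠ j) :
    (i : ZMod n) ≠ (j : ZMod n) := fun h => hij (zmod_cast_inj hn hi hj h)

lemma not_outer_lr {a b : ZMod n} : s(Sum.inl a, Sum.inr b) ∉ outerEdges n := by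
  rintro ⟨i, h⟩; rw [Sym2.eq_iff] at h; simp at h

lemma not_outer_rl {a b : ZMod n} : s(Sum.inr a, Sum.inl b) ∉ outerEdges n := by
  rintro ⟨i, h⟩; rw [Sym2.eq_iff] at h; simp at h

lemma not_outer_rr {a b : ZMod n} : s(Sum.inr a, Sum.inr b) ∉ outerEdges n := by
  rintro ⟨i, h⟩; rw [Sym2.eq_iff] at h; simp at h

lemma not_spoke_ll {a b : ZMod n} : s(Sum.inl a, Sum.inl b) ∉ spokeEdges n := by
  rintro ⟨i, h⟩; rw [Sym2.eq_iff] at h; simp at h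

lemma not_spoke_rr {a b : ZMod n} : s(Sum.inr a, Sum.inr b) ∉ spokeEdges n := by
  rintro ⟨i, h⟩; rw [Sym2.eq_iff] at h; simp at h

lemma not_inner_ll {a b : ZMod n} : s(Sum.inl a, Sum.inl b) ∉ innerEdges n k := by
  rintro ⟨i, h⟩; rw [Sym2.eq_iff] at h; simp at h

lemma not_inner_lr {a b : ZMod n} : s(Sum.inl a, Sum.inr b) ∉ innerEdges n k := by
  rintro ⟨i, h⟩; rw [Sym2.eq_iff] at h; simp at h

lemma not_inner_rl {a b : ZMod n} : s(Sum.inr a, Sum.inl b) ∉ innerEdges n k := by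
  rintro ⟨i, h⟩; rw [Sym2.eq_iff] at h; simp at h

lemma conn_sup_aux {V : Type*} {G : SimpleGraph V} {H K : G.Subgraph}
    (hH : H.Connected) (hK : K.Connected) (hn : (H ⊓ K).verts.Nonempty) :
    (H ⊔ K).Connected :=
  Subgraph.connected_sup hH.preconnected hK.preconnected hn

set_option maxHeartbeats 2000000 in
lemma backward_aux (n k : ℕ) (hn : 80 < n) (hk1 : 1 ≤ k) (hk2 : 2 * k < n)
    (m : ZMod n) (hm0 : m ≠ (0 : ZMod n)) (hm4 : m ≠ (4 : ZMod n))
    (hi1 : s(Sum.inr (0 : ZMod n), Sum.inr m) ∈ innerEdges n k)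
    (hi2 : s(Sum.inr m, Sum.inr (4 : ZMod n)) ∈ innerEdges n k) :
    ∃ C : (GP n k).Subgraph, IsNCycle 8 C ∧
        (C.edgeSet ∩ outerEdges n).ncard = 4 ∧
        (C.edgeSet ∩ spokeEdges n).ncard = 2 ∧
        (C.edgeSet ∩ innerEdges n k).ncard = 2 := by
  haveI : NeZero n := ⟨by omega⟩
  have hcc : ∀ i j : ℕ, i < n → j < n → i ≠ j → ((i : ZMod n) ≠ (j : ZMod n)) :=
    fun i j hi hj hij => zmod_cast_ne (by omega) hi hj hij
  have h01 : (0 : ZMod n) ≠ 1 := by simpa using hcc 0 1 (by omega) (by omega) (by omega)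
  have h02 : (0 : ZMod n) ≠ 2 := by simpa using hcc 0 2 (by omega) (by omega) (by omega)
  have h03 : (0 : ZMod n) ≠ 3 := by simpa using hcc 0 3 (by omega) (by omega) (by omega)
  have h04 : (0 : ZMod n) ≠ 4 := by simpa using hcc 0 4 (by omega) (by omega) (by omega)
  have h12 : (1 : ZMod n) ≠ 2 := by simpa using hcc 1 2 (by omega) (by omega) (by omega)
  have h13 : (1 : ZMod n) ≠ 3 := by simpa using hcc 1 3 (by omega) (by omega) (by omega)
  have h14 : (1 : ZMod n) ≠ 4 := by simpa using hcc 1 4 (by omega) (by omega) (by omega)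
  have h23 : (2 : ZMod n) ≠ 3 := by simpa using hcc 2 3 (by omega) (by omega) (by omega)
  have h24 : (2 : ZMod n) ≠ 4 := by simpa using hcc 2 4 (by omega) (by omega) (by omega)
  have h34 : (3 : ZMod n) ≠ 4 := by simpa using hcc 3 4 (by omega) (by omega) (by omega)
  have h10 := h01.symm; have h20 := h02.symm; have h30 := h03.symm; have h40 := h04.symm
  have h21 := h12.symm; have h31 := h13.symm; have h41 := h14.symm
  have h32 := h23.symm; have h42 := h24.symm; have h43 := h34.symm
  have hm0' := hm0.symm; have hm4' := hm4.symm
  have ai1 : (GP n k).Adj (Sum.inr (0 : ZMod n)) (Sum.inr m) := by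
    obtain ⟨i, hi⟩ := hi1
    rw [Sym2.eq_iff] at hi
    refine gp_adj_inr_inr.mpr ⟨hm0', ?_⟩
    rcases hi with ⟨hh1, hh2⟩ | ⟨hh1, hh2⟩
    · left; rw [Sum.inr.injEq] at hh1 hh2; rw [hh2, ← hh1]
    · right; rw [Sum.inr.injEq] at hh1 hh2; rw [← hh2] at hh1; exact hh1
  have ai2 : (GP n k).Adj (Sum.inr m) (Sum.inr (4 : ZMod n)) := by
    obtain ⟨i, hi⟩ := hi2
    rw [Sym2.eq_iff] at hi
    refine gp_adj_inr_inr.mpr ⟨hm4, ?_⟩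
    rcases hi with ⟨hh1, hh2⟩ | ⟨hh1, hh2⟩
    · left; rw [Sum.inr.injEq] at hh1 hh2; rw [hh2, ← hh1]
    · right; rw [Sum.inr.injEq] at hh1 hh2; rw [← hh2] at hh1; exact hh1
  have a01 : (GP n k).Adj (Sum.inl (0 : ZMod n)) (Sum.inl (1 : ZMod n)) :=
    gp_adj_inl_inl.mpr ⟨h01, Or.inl (by rw [zero_add])⟩
  have a12 : (GP n k).Adj (Sum.inl (1 : ZMod n)) (Sum.inl (2 : ZMod n)) :=
    gp_adj_inl_inl.mpr ⟨h12, Or.inl (by rw [one_add_one_eq_two])⟩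
  have a23 : (GP n k).Adj (Sum.inl (2 : ZMod n)) (Sum.inl (3 : ZMod n)) :=
    gp_adj_inl_inl.mpr ⟨h23, Or.inl (by rw [two_add_one_eq_three])⟩
  have a34 : (GP n k).Adj (Sum.inl (3 : ZMod n)) (Sum.inl (4 : ZMod n)) :=
    gp_adj_inl_inl.mpr ⟨h34, Or.inl (by rw [three_add_one_eq_four])⟩
  have as0 : (GP n k).Adj (Sum.inl (0 : ZMod n)) (Sum.inr (0 : ZMod n)) :=
    gp_adj_inl_inr.mpr rfl
  have as4 : (GP n k).Adj (Sum.inl (4 : ZMod n)) (Sum.inr (4 : ZMod n)) :=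
    gp_adj_inl_inr.mpr rfl
  set G := GP n k with hG
  set C : G.Subgraph := G.subgraphOfAdj a01 ⊔ G.subgraphOfAdj a12 ⊔ G.subgraphOfAdj a23 ⊔
      G.subgraphOfAdj a34 ⊔ G.subgraphOfAdj as4 ⊔ G.subgraphOfAdj ai2.symm ⊔
      G.subgraphOfAdj ai1 ⊔ G.subgraphOfAdj as0 with hC
  have hverts : C.verts = {Sum.inl (0 : ZMod n), Sum.inl (1 : ZMod n), Sum.inl (2 : ZMod n),
      Sum.inl (3 : ZMod n), Sum.inl (4 : ZMod n), Sum.inr (4 : ZMod n), Sum.inr m,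
      Sum.inr (0 : ZMod n)} := by
    ext x
    simp only [hC, Subgraph.verts_sup, subgraphOfAdj_verts, Set.mem_union, Set.mem_insert_iff,
      Set.mem_singleton_iff]
    constructor
    · rintro ((((((((rfl|rfl)|(rfl|rfl))|(rfl|rfl))|(rfl|rfl))|(rfl|rfl))|(rfl|rfl))|(rfl|rfl))|(rfl|rfl)) <;> simp
    · rintro (rfl|rfl|rfl|rfl|rfl|rfl|rfl|rfl) <;> simp
  have hedge : C.edgeSet = {s(Sum.inl (0 : ZMod n), Sum.inl (1 : ZMod n)),
      s(Sum.inl (1 : ZMod n), Sum.inl (2 : ZMod n)),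
      s(Sum.inl (2 : ZMod n), Sum.inl (3 : ZMod n)),
      s(Sum.inl (3 : ZMod n), Sum.inl (4 : ZMod n)),
      s(Sum.inl (4 : ZMod n), Sum.inr (4 : ZMod n)),
      s(Sum.inr (4 : ZMod n), Sum.inr m),
      s(Sum.inr (0 : ZMod n), Sum.inr m),
      s(Sum.inl (0 : ZMod n), Sum.inr (0 : ZMod n))} := by
    ext e
    simp only [hC, Subgraph.edgeSet_sup, edgeSet_subgraphOfAdj, Set.mem_union,
      Set.mem_insert_iff, Set.mem_singleton_iff]
    constructor
    · rintro ((((((((rfl|rfl)|(rfl|rfl))|(rfl|rfl))|(rfl|rfl))|(rfl|rfl))|(rfl|rfl))|(rfl|rfl))|(rfl|rfl)) <;> simp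
    · rintro (rfl|rfl|rfl|rfl|rfl|rfl|rfl|rfl) <;> simp
  refine ⟨C, ⟨?_, ?_, ?_, ?_⟩, ?_, ?_, ?_⟩
  · -- verts count
    rw [hverts]
    rw [Set.ncard_insert_of_notMem (by simp [h01, h02, h03, h04]),
      Set.ncard_insert_of_notMem (by simp [h12, h13, h14]),
      Set.ncard_insert_of_notMem (by simp [h23, h24]),
      Set.ncard_insert_of_notMem (by simp [h34]),
      Set.ncard_insert_of_notMem (by simp),
      Set.ncard_insert_of_notMem (by simp [hm4', h40]),
      Set.ncard_insert_of_notMem (by simp [hm0]),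
      Set.ncard_singleton]
  · -- edge count
    rw [hedge]
    rw [Set.ncard_insert_of_notMem (by simp [Sym2.eq_iff, h01, h10, h02, h03, h04]),
      Set.ncard_insert_of_notMem (by simp [Sym2.eq_iff, h12, h21, h13, h14, h10]),
      Set.ncard_insert_of_notMem (by simp [Sym2.eq_iff, h23, h32, h24, h21]),
      Set.ncard_insert_of_notMem (by simp [Sym2.eq_iff, h34, h43, h32]),
      Set.ncard_insert_of_notMem (by simp [Sym2.eq_iff, h40]),
      Set.ncard_insert_of_notMem (by simp [Sym2.eq_iff, h40, h04, hm0', hm4']),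
      Set.ncard_insert_of_notMem (by simp [Sym2.eq_iff, hm0']),
      Set.ncard_singleton]
  · -- connected
    refine conn_sup_aux ?_ (Subgraph.subgraphOfAdj_connected _)
      ⟨Sum.inl (0 : ZMod n), by simp⟩
    refine conn_sup_aux ?_ (Subgraph.subgraphOfAdj_connected _)
      ⟨Sum.inr m, by simp⟩
    refine conn_sup_aux ?_ (Subgraph.subgraphOfAdj_connected _)
      ⟨Sum.inr (4 : ZMod n), by simp⟩
    refine conn_sup_aux ?_ (Subgraph.subgraphOfAdj_connected _)
      ⟨Sum.inl (4 : ZMod n), by simp⟩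
    refine conn_sup_aux ?_ (Subgraph.subgraphOfAdj_connected _)
      ⟨Sum.inl (3 : ZMod n), by simp⟩
    refine conn_sup_aux ?_ (Subgraph.subgraphOfAdj_connected _)
      ⟨Sum.inl (2 : ZMod n), by simp⟩
    refine conn_sup_aux (Subgraph.subgraphOfAdj_connected _) (Subgraph.subgraphOfAdj_connected _)
      ⟨Sum.inl (1 : ZMod n), by simp⟩
  · -- degrees
    intro v hv
    rw [hverts] at hv
    simp only [Set.mem_insert_iff, Set.mem_singleton_iff] at hv
    rcases hv with rfl | rfl | rfl | rfl | rfl | rfl | rfl | rfl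
    · have : C.neighborSet (Sum.inl (0 : ZMod n)) = {Sum.inl (1 : ZMod n), Sum.inr (0 : ZMod n)} := by
        ext w
        rw [Subgraph.mem_neighborSet, ← Subgraph.mem_edgeSet, hedge]
        simp only [Set.mem_insert_iff, Set.mem_singleton_iff]
        simp [Sym2.eq_iff, h01, h02, h03, h04, h12, h13, h14, h23, h24, h34, h10, h20, h30, h40, h21, h31, h41, h32, h42, h43, hm0, hm0', hm4, hm4']
      rw [this, Set.ncard_pair (by simp)]
    · have : C.neighborSet (Sum.inl (1 : ZMod n)) = {Sum.inl (0 : ZMod n), Sum.inl (2 : ZMod n)} := by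
        ext w
        rw [Subgraph.mem_neighborSet, ← Subgraph.mem_edgeSet, hedge]
        simp only [Set.mem_insert_iff, Set.mem_singleton_iff]
        simp [Sym2.eq_iff, h01, h02, h03, h04, h12, h13, h14, h23, h24, h34, h10, h20, h30, h40, h21, h31, h41, h32, h42, h43, hm0, hm0', hm4, hm4']
      rw [this, Set.ncard_pair (by simp [h02])]
    · have : C.neighborSet (Sum.inl (2 : ZMod n)) = {Sum.inl (1 : ZMod n), Sum.inl (3 : ZMod n)} := by
        ext w
        rw [Subgraph.mem_neighborSet, ← Subgraph.mem_edgeSet, hedge]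
        simp only [Set.mem_insert_iff, Set.mem_singleton_iff]
        simp [Sym2.eq_iff, h01, h02, h03, h04, h12, h13, h14, h23, h24, h34, h10, h20, h30, h40, h21, h31, h41, h32, h42, h43, hm0, hm0', hm4, hm4']
      rw [this, Set.ncard_pair (by simp [h13])]
    · have : C.neighborSet (Sum.inl (3 : ZMod n)) = {Sum.inl (2 : ZMod n), Sum.inl (4 : ZMod n)} := by
        ext w
        rw [Subgraph.mem_neighborSet, ← Subgraph.mem_edgeSet, hedge]
        simp only [Set.mem_insert_iff, Set.mem_singleton_iff]
        simp [Sym2.eq_iff, h01, h02, h03, h04, h12, h13, h14, h23, h24, h34, h10, h20, h30, h40, h21, h31, h41, h32, h42, h43, hm0, hm0', hm4, hm4']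
      rw [this, Set.ncard_pair (by simp [h24])]
    · have : C.neighborSet (Sum.inl (4 : ZMod n)) = {Sum.inl (3 : ZMod n), Sum.inr (4 : ZMod n)} := by
        ext w
        rw [Subgraph.mem_neighborSet, ← Subgraph.mem_edgeSet, hedge]
        simp only [Set.mem_insert_iff, Set.mem_singleton_iff]
        simp [Sym2.eq_iff, h01, h02, h03, h04, h12, h13, h14, h23, h24, h34, h10, h20, h30, h40, h21, h31, h41, h32, h42, h43, hm0, hm0', hm4, hm4']
      rw [this, Set.ncard_pair (by simp)]
    · have : C.neighborSet (Sum.inr (4 : ZMod n)) = {Sum.inl (4 : ZMod n), Sum.inr m} := by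
        ext w
        rw [Subgraph.mem_neighborSet, ← Subgraph.mem_edgeSet, hedge]
        simp only [Set.mem_insert_iff, Set.mem_singleton_iff]
        simp [Sym2.eq_iff, h01, h02, h03, h04, h12, h13, h14, h23, h24, h34, h10, h20, h30, h40, h21, h31, h41, h32, h42, h43, hm0, hm0', hm4, hm4']
      rw [this, Set.ncard_pair (by simp)]
    · have : C.neighborSet (Sum.inr m) = {Sum.inr (4 : ZMod n), Sum.inr (0 : ZMod n)} := by
        ext w
        rw [Subgraph.mem_neighborSet, ← Subgraph.mem_edgeSet, hedge]
        simp only [Set.mem_insert_iff, Set.mem_singleton_iff]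
        simp [Sym2.eq_iff, h01, h02, h03, h04, h12, h13, h14, h23, h24, h34, h10, h20, h30, h40, h21, h31, h41, h32, h42, h43, hm0, hm0', hm4, hm4']
      rw [this, Set.ncard_pair (by simp [h40])]
    · have : C.neighborSet (Sum.inr (0 : ZMod n)) = {Sum.inr m, Sum.inl (0 : ZMod n)} := by
        ext w
        rw [Subgraph.mem_neighborSet, ← Subgraph.mem_edgeSet, hedge]
        simp only [Set.mem_insert_iff, Set.mem_singleton_iff]
        simp [Sym2.eq_iff, h01, h02, h03, h04, h12, h13, h14, h23, h24, h34, h10, h20, h30, h40, h21, h31, h41, h32, h42, h43, hm0, hm0', hm4, hm4']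
      rw [this, Set.ncard_pair (by simp)]
  · -- outer edges count
    have : C.edgeSet ∩ outerEdges n = {s(Sum.inl (0 : ZMod n), Sum.inl (1 : ZMod n)),
        s(Sum.inl (1 : ZMod n), Sum.inl (2 : ZMod n)),
        s(Sum.inl (2 : ZMod n), Sum.inl (3 : ZMod n)),
        s(Sum.inl (3 : ZMod n), Sum.inl (4 : ZMod n))} := by
      rw [hedge]
      ext e
      constructor
      · rintro ⟨he, ho⟩
        simp only [Set.mem_insert_iff, Set.mem_singleton_iff] at he ⊢
        rcases he with rfl|rfl|rfl|rfl|rfl|rfl|rfl|rfl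
        · tauto
        · tauto
        · tauto
        · tauto
        · exact absurd ho not_outer_lr
        · exact absurd ho not_outer_rr
        · exact absurd ho not_outer_rr
        · exact absurd ho not_outer_lr
      · intro he
        simp only [Set.mem_insert_iff, Set.mem_singleton_iff] at he
        refine ⟨by simp only [Set.mem_insert_iff, Set.mem_singleton_iff]; tauto, ?_⟩
        rcases he with rfl|rfl|rfl|rfl
        · exact ⟨0, by rw [zero_add]⟩
        · exact ⟨1, by rw [one_add_one_eq_two]⟩
        · exact ⟨2, by rw [two_add_one_eq_three]⟩
        · exact ⟨3, by rw [three_add_one_eq_four]⟩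
    rw [this]
    rw [Set.ncard_insert_of_notMem (by simp [Sym2.eq_iff, h01, h10, h02, h03, h04]),
      Set.ncard_insert_of_notMem (by simp [Sym2.eq_iff, h12, h21, h13, h14, h10]),
      Set.ncard_insert_of_notMem (by simp [Sym2.eq_iff, h23, h32, h24, h21]),
      Set.ncard_singleton]
  · -- spoke edges count
    have : C.edgeSet ∩ spokeEdges n = {s(Sum.inl (4 : ZMod n), Sum.inr (4 : ZMod n)),
        s(Sum.inl (0 : ZMod n), Sum.inr (0 : ZMod n))} := by
      rw [hedge]
      ext e
      constructor
      · rintro ⟨he, ho⟩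
        simp only [Set.mem_insert_iff, Set.mem_singleton_iff] at he ⊢
        rcases he with rfl|rfl|rfl|rfl|rfl|rfl|rfl|rfl
        · exact absurd ho not_spoke_ll
        · exact absurd ho not_spoke_ll
        · exact absurd ho not_spoke_ll
        · exact absurd ho not_spoke_ll
        · tauto
        · exact absurd ho not_spoke_rr
        · exact absurd ho not_spoke_rr
        · tauto
      · intro he
        simp only [Set.mem_insert_iff, Set.mem_singleton_iff] at he
        refine ⟨by simp only [Set.mem_insert_iff, Set.mem_singleton_iff]; tauto, ?_⟩
        rcases he with rfl|rfl
        · exact ⟨4, rfl⟩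
        · exact ⟨0, rfl⟩
    rw [this, Set.ncard_pair (by simp [Sym2.eq_iff, h40, h04])]
  · -- inner edges count
    have : C.edgeSet ∩ innerEdges n k = {s(Sum.inr (4 : ZMod n), Sum.inr m),
        s(Sum.inr (0 : ZMod n), Sum.inr m)} := by
      rw [hedge]
      ext e
      constructor
      · rintro ⟨he, ho⟩
        simp only [Set.mem_insert_iff, Set.mem_singleton_iff] at he ⊢
        rcases he with rfl|rfl|rfl|rfl|rfl|rfl|rfl|rfl
        · exact absurd ho not_inner_ll
        · exact absurd ho not_inner_ll
        · exact absurd ho not_inner_ll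
        · exact absurd ho not_inner_ll
        · exact absurd ho not_inner_lr
        · tauto
        · tauto
        · exact absurd ho not_inner_lr
      · intro he
        simp only [Set.mem_insert_iff, Set.mem_singleton_iff] at he
        refine ⟨by simp only [Set.mem_insert_iff, Set.mem_singleton_iff]; tauto, ?_⟩
        rcases he with rfl|rfl
        · rw [Sym2.eq_swap]; exact hi2
        · exact hi1
    rw [this, Set.ncard_pair (by simp [Sym2.eq_iff, h40, h04, hm0', hm4'])]

end Infra

section Triple
variable {α : Type*} [Finite α]

open scoped Classical in
lemma ncard_subset_triple {s : Set α} {a b c : α}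
    (hab : a ≠ b) (hac : a ≠ c) (hbc : b ≠ c) (h : s ⊆ {a, b, c}) :
    s.ncard = (if a ∈ s then 1 else 0) + (if b ∈ s then 1 else 0) + (if c ∈ s then 1 else 0) := by
  by_cases ha : a ∈ s <;> by_cases hb : b ∈ s <;> by_cases hc : c ∈ s <;>
      simp only [ha, hb, hc, if_true, if_false]
  · rw [show s = {a, b, c} from Set.Subset.antisymm h (by
      intro x hx
      rcases hx with rfl | rfl | rfl <;> assumption)]
    rw [Set.ncard_insert_of_notMem (by simp [hab, hac]), Set.ncard_pair hbc]
  · rw [show s = {a, b} from Set.Subset.antisymm (by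
      intro x hx
      have hx3 := h hx
      simp only [Set.mem_insert_iff, Set.mem_singleton_iff] at hx3 ⊢
      rcases hx3 with rfl | rfl | rfl <;> tauto) (by
      intro x hx
      rcases hx with rfl | rfl <;> assumption)]
    rw [Set.ncard_pair hab]
  · rw [show s = {a, c} from Set.Subset.antisymm (by
      intro x hx
      have hx3 := h hx
      simp only [Set.mem_insert_iff, Set.mem_singleton_iff] at hx3 ⊢
      rcases hx3 with rfl | rfl | rfl <;> tauto) (by
      intro x hx
      rcases hx with rfl | rfl <;> assumption)]
    rw [Set.ncard_pair hac]
  · rw [show s = {a} from Set.Subset.antisymm (by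
      intro x hx
      have hx3 := h hx
      simp only [Set.mem_insert_iff, Set.mem_singleton_iff] at hx3 ⊢
      rcases hx3 with rfl | rfl | rfl <;> tauto) (by
      intro x hx
      rcases hx with rfl <;> assumption)]
    rw [Set.ncard_singleton]
  · rw [show s = {b, c} from Set.Subset.antisymm (by
      intro x hx
      have hx3 := h hx
      simp only [Set.mem_insert_iff, Set.mem_singleton_iff] at hx3 ⊢
      rcases hx3 with rfl | rfl | rfl <;> tauto) (by
      intro x hx
      rcases hx with rfl | rfl <;> assumption)]
    rw [Set.ncard_pair hbc]
  · rw [show s = {b} from Set.Subset.antisymm (by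
      intro x hx
      have hx3 := h hx
      simp only [Set.mem_insert_iff, Set.mem_singleton_iff] at hx3 ⊢
      rcases hx3 with rfl | rfl | rfl <;> tauto) (by
      intro x hx
      rcases hx with rfl <;> assumption)]
    rw [Set.ncard_singleton]
  · rw [show s = {c} from Set.Subset.antisymm (by
      intro x hx
      have hx3 := h hx
      simp only [Set.mem_insert_iff, Set.mem_singleton_iff] at hx3 ⊢
      rcases hx3 with rfl | rfl | rfl <;> tauto) (by
      intro x hx
      rcases hx with rfl <;> assumption)]
    rw [Set.ncard_singleton]
  · rw [show s = ∅ from Set.subset_empty_iff.mp (by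
      intro x hx
      have hx3 := h hx
      simp only [Set.mem_insert_iff, Set.mem_singleton_iff] at hx3
      rcases hx3 with rfl | rfl | rfl <;> tauto)]
    rw [Set.ncard_empty]

end Triple

section InnerStruct
variable {n : ℕ}

open scoped Classical in
lemma exactly_one_mem {P Q : Prop} {c : ℕ} (hc : c = 0 ∨ c = 2)
    (h : c = (if P then 1 else 0) + (if Q then 1 else 0) + 1) :
    (P ∧ ¬ Q) ∨ (¬ P ∧ Q) := by
  by_cases hp : P <;> by_cases hq : Q
  · exfalso; rw [if_pos hp, if_pos hq] at h; omega
  · exact Or.inl ⟨hp, hq⟩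
  · exact Or.inr ⟨hp, hq⟩
  · exfalso; rw [if_neg hp, if_neg hq] at h; omega

open scoped Classical in
/-- From the degree equations on the inner rim, the two inner edges form a path and the
spokes sit at its ends. -/
lemma inner_struct [NeZero n] (κ : ZMod n) (hk : κ ≠ 0) (h2k : κ + κ ≠ 0)
    (S I : Set (ZMod n)) (hS : S.ncard = 2) (hI : I.ncard = 2)
    (H : ∀ x : ZMod n,
      (if x ∈ S then 1 else 0) + (if x ∈ I then 1 else 0) + (if x - κ ∈ I then 1 else 0) = 0 ∨
      (if x ∈ S then 1 else 0) + (if x ∈ I then 1 else 0) + (if x - κ ∈ I then 1 else 0) = 2) :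
    ∃ b : ZMod n, S = {b, b + κ + κ} := by
  -- membership extractor
  have hSmem : ∀ x : ZMod n, x ∈ I → x - κ ∉ I → x ∈ S := by
    intro x hx hx'
    by_contra hxs
    rcases H x with h | h <;> simp [hx, hx', hxs] at h
  have hSmem' : ∀ x : ZMod n, x ∉ I → x - κ ∈ I → x ∈ S := by
    intro x hx hx'
    by_contra hxs
    rcases H x with h | h <;> simp [hx, hx', hxs] at h
  obtain ⟨b, d, hbd, hIeq⟩ := Set.ncard_eq_two.mp hI
  have hkey : ∃ b' : ZMod n, I = {b', b' + κ} := by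
    by_cases hd : d = b + κ
    · exact ⟨b, by rw [hIeq, hd]⟩
    by_cases hb : b = d + κ
    · exact ⟨d, by rw [hIeq, hb, Set.pair_comm]⟩
    -- impossible case : four distinct spokes
    exfalso
    have hbk : b + κ ≠ d := fun h => hd h.symm
    have hdk : d + κ ≠ b := fun h => hb h.symm
    have m1 : b ∈ S := by
      refine hSmem b (by simp [hIeq]) ?_
      simp only [hIeq, Set.mem_insert_iff, Set.mem_singleton_iff]
      push_neg
      constructor
      · intro h; exact hk (by first | linear_combination h | linear_combination -h)
      · intro h; exact hb (by first | linear_combination h | linear_combination -h)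
    have m2 : d ∈ S := by
      refine hSmem d (by simp [hIeq]) ?_
      simp only [hIeq, Set.mem_insert_iff, Set.mem_singleton_iff]
      push_neg
      constructor
      · intro h; exact hd (by first | linear_combination h | linear_combination -h)
      · intro h; exact hk (by first | linear_combination h | linear_combination -h)
    have m3 : b + κ ∈ S := by
      refine hSmem' (b + κ) ?_ (by simp [hIeq])
      simp only [hIeq, Set.mem_insert_iff, Set.mem_singleton_iff]
      push_neg
      exact ⟨fun h => hk (by first | linear_combination h | linear_combination -h), hbk⟩
    have m4 : d + κ ∈ S := by
      refine hSmem' (d + κ) ?_ (by simp [hIeq])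
      simp only [hIeq, Set.mem_insert_iff, Set.mem_singleton_iff]
      push_neg
      exact ⟨hdk, fun h => hk (by first | linear_combination h | linear_combination -h)⟩
    have hsub : ({b, d, b + κ, d + κ} : Set (ZMod n)) ⊆ S := by
      intro x hx
      rcases hx with rfl | rfl | rfl | rfl <;> assumption
    have hcard : ({b, d, b + κ, d + κ} : Set (ZMod n)).ncard = 4 := by
      have e1 : b ≠ b + κ := fun h => hk (by first | linear_combination h | linear_combination -h)
      have e2 : d ≠ d + κ := fun h => hk (by first | linear_combination h | linear_combination -h)
      have e3 : b ≠ d + κ := fun h => hdk h.symm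
      have e4 : d ≠ b + κ := fun h => hbk h.symm
      have e5 : b + κ ≠ d + κ := fun h => hbd (by first | linear_combination h | linear_combination -h)
      rw [Set.ncard_insert_of_notMem (by simp [hbd, e1, e3]),
        Set.ncard_insert_of_notMem (by simp [e4, e2]),
        Set.ncard_pair e5]
    have := Set.ncard_le_ncard hsub (Set.toFinite S)
    rw [hcard, hS] at this
    omega
  -- main case
  obtain ⟨a, hIa⟩ := hkey
  refine ⟨a, ?_⟩
  have hanek : a ≠ a + κ := fun h => hk (by first | linear_combination h | linear_combination -h)
  have m1 : a ∈ S := by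
    refine hSmem a (by simp [hIa]) ?_
    simp only [hIa, Set.mem_insert_iff, Set.mem_singleton_iff]
    push_neg
    exact ⟨fun h => hk (by first | linear_combination h | linear_combination -h), fun h => h2k (by first | linear_combination h | linear_combination -h)⟩
  have m2 : a + κ + κ ∈ S := by
    refine hSmem' (a + κ + κ) ?_ (by simp [hIa])
    simp only [hIa, Set.mem_insert_iff, Set.mem_singleton_iff]
    push_neg
    exact ⟨fun h => h2k (by first | linear_combination h | linear_combination -h), fun h => hk (by first | linear_combination h | linear_combination -h)⟩
  have hane : a ≠ a + κ + κ := fun h => h2k (by first | linear_combination h | linear_combination -h)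
  have hsub : ({a, a + κ + κ} : Set (ZMod n)) ⊆ S := by
    intro x hx
    rcases hx with rfl | rfl <;> assumption
  refine (Set.eq_of_subset_of_ncard_le hsub ?_ (Set.toFinite S)).symm
  rw [hS, Set.ncard_pair hane]

end InnerStruct

section Arc
variable {n : ℕ}

open scoped Classical in
lemma arc_oneside [NeZero n] (hn : 80 < n) (T : Set (ZMod n)) (a c : ZMod n)
    (hT : T.ncard = 4) (hac : a ≠ c)
    (H : ∀ x : ZMod n,
      (if x ∈ T then 1 else 0) + (if x - 1 ∈ T then 1 else 0) +
        (if x = a ∨ x = c then 1 else 0) = 0 ∨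
      (if x ∈ T then 1 else 0) + (if x - 1 ∈ T then 1 else 0) +
        (if x = a ∨ x = c then 1 else 0) = 2)
    (ha : a ∈ T) (ha1 : a - 1 ∉ T) : c = a + 4 := by
  have hinj : ∀ i j : ℕ, i < n → j < n → (i : ZMod n) = (j : ZMod n) → i = j :=
    fun i j hi hj h => zmod_cast_inj (by omega) hi hj h
  have hzne : ∀ z : ZMod n, ∀ i j : ℕ, i < n → j < n → i ≠ j →
      z + (i : ZMod n) ≠ z + (j : ZMod n) := by
    intro z i j hi hj hij hcon
    exact hij (hinj i j hi hj (by linear_combination hcon))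
  have g10 : ((1 : ZMod n) : ZMod n) ≠ (0 : ZMod n) := by simpa using (fun h => (by omega : (1:ℕ) ≠ 0) (hinj 1 0 (by omega) (by omega) h))
  have g20 : ((2 : ZMod n) : ZMod n) ≠ (0 : ZMod n) := by simpa using (fun h => (by omega : (2:ℕ) ≠ 0) (hinj 2 0 (by omega) (by omega) h))
  have g30 : ((3 : ZMod n) : ZMod n) ≠ (0 : ZMod n) := by simpa using (fun h => (by omega : (3:ℕ) ≠ 0) (hinj 3 0 (by omega) (by omega) h))
  have g40 : ((4 : ZMod n) : ZMod n) ≠ (0 : ZMod n) := by simpa using (fun h => (by omega : (4:ℕ) ≠ 0) (hinj 4 0 (by omega) (by omega) h))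
  have g12 : ((1 : ZMod n) : ZMod n) ≠ (2 : ZMod n) := by simpa using (fun h => (by omega : (1:ℕ) ≠ 2) (hinj 1 2 (by omega) (by omega) h))
  have g13 : ((1 : ZMod n) : ZMod n) ≠ (3 : ZMod n) := by simpa using (fun h => (by omega : (1:ℕ) ≠ 3) (hinj 1 3 (by omega) (by omega) h))
  have g14 : ((1 : ZMod n) : ZMod n) ≠ (4 : ZMod n) := by simpa using (fun h => (by omega : (1:ℕ) ≠ 4) (hinj 1 4 (by omega) (by omega) h))
  have g23 : ((2 : ZMod n) : ZMod n) ≠ (3 : ZMod n) := by simpa using (fun h => (by omega : (2:ℕ) ≠ 3) (hinj 2 3 (by omega) (by omega) h))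
  have g24 : ((2 : ZMod n) : ZMod n) ≠ (4 : ZMod n) := by simpa using (fun h => (by omega : (2:ℕ) ≠ 4) (hinj 2 4 (by omega) (by omega) h))
  have g34 : ((3 : ZMod n) : ZMod n) ≠ (4 : ZMod n) := by simpa using (fun h => (by omega : (3:ℕ) ≠ 4) (hinj 3 4 (by omega) (by omega) h))
  have g41 : ((4 : ZMod n) : ZMod n) ≠ (1 : ZMod n) := by simpa using (fun h => (by omega : (4:ℕ) ≠ 1) (hinj 4 1 (by omega) (by omega) h))
  have g42 : ((4 : ZMod n) : ZMod n) ≠ (2 : ZMod n) := by simpa using (fun h => (by omega : (4:ℕ) ≠ 2) (hinj 4 2 (by omega) (by omega) h))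
  have g43 : ((4 : ZMod n) : ZMod n) ≠ (3 : ZMod n) := by simpa using (fun h => (by omega : (4:ℕ) ≠ 3) (hinj 4 3 (by omega) (by omega) h))
  have hzne0 : ∀ (z : ZMod n) (i : ℕ), 0 < i → i < n → z + (i : ZMod n) ≠ z := by
    intro z i h0 hilt hcon
    have : ((i : ℕ) : ZMod n) = ((0 : ℕ) : ZMod n) := by push_cast; linear_combination hcon
    have := hinj i 0 hilt (by omega) this
    omega
  have step : ∀ x : ZMod n, x ∈ T → x + 1 ≠ a → x + 1 ≠ c → x + 1 ∈ T := by
    intro x hx h1 h2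
    by_contra hmem
    rcases H (x + 1) with h | h <;>
      simp [hmem, show x + 1 - 1 = x from by ring, hx, h1, h2] at h
  -- grow the path from `a` upwards
  have build : ∀ j : ℕ, j ≤ 3 → (∀ i : ℕ, i ≤ j → a + (i : ZMod n) ∈ T) ∨ (∃ j' : ℕ, j' ≤ 3 ∧
      c = a + ((j' + 1 : ℕ) : ZMod n) ∧ (∀ i : ℕ, i ≤ j' → a + (i : ZMod n) ∈ T)) := by
    intro j hj
    induction j with
    | zero =>
      left
      intro i hi
      interval_cases i
      simpa using ha
    | succ j ih =>
      rcases ih (by omega) with hprev | hstop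
      · by_cases hc : a + ((j + 1 : ℕ) : ZMod n) = c
        · right
          exact ⟨j, by omega, hc.symm, fun i hi => hprev i hi⟩
        · left
          intro i hi
          rcases Nat.lt_or_ge i (j + 1) with hlt | hge
          · exact hprev i (by omega)
          have hieq : i = j + 1 := by omega
          subst hieq
          have hja : a + (j : ZMod n) + 1 ≠ a := by
            intro hcon
            have hcast : ((j + 1 : ℕ) : ZMod n) = ((0 : ℕ) : ZMod n) := by
              push_cast
              linear_combination hcon
            have := hinj _ _ (by omega) (by omega) hcast
            omega
          have hjc : a + (j : ZMod n) + 1 ≠ c := by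
            intro hcon
            apply hc
            rw [← hcon]
            push_cast
            ring
          have hstep := step (a + (j : ZMod n)) (hprev j (by omega)) hja hjc
          have : a + ((j + 1 : ℕ) : ZMod n) = a + (j : ZMod n) + 1 := by
            push_cast
            ring
          rw [this]
          exact hstep
      · right
        exact hstop
  -- orphan contradiction for early termination
  have orphan : ∀ j' : ℕ, j' ≤ 2 → c = a + ((j' + 1 : ℕ) : ZMod n) →
      (∀ i : ℕ, i ≤ j' → a + (i : ZMod n) ∈ T) → False := by
    intro j' hj' hc hblock
    have hex : ∃ t, t ∈ T ∧ ∀ i : ℕ, i ≤ j' → t ≠ a + (i : ZMod n) := by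
      by_contra hcon
      push_neg at hcon
      have hsub : T ⊆ {a, a + ((1 : ℕ) : ZMod n), a + ((2 : ℕ) : ZMod n)} := by
        intro t ht
        obtain ⟨i, hi, hti⟩ := hcon t ht
        subst hti
        have hi2 : i ≤ 2 := by omega
        interval_cases i <;> simp
      have hle : T.ncard ≤ 3 := by
        refine le_trans (Set.ncard_le_ncard hsub (Set.toFinite _)) ?_
        refine le_trans (Set.ncard_insert_le _ _) ?_
        refine Nat.succ_le_succ ?_
        exact le_trans (Set.ncard_insert_le _ _) (by simp)
      omega
    obtain ⟨t, ht, htout⟩ := hex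
    have claim : ∀ m : ℕ, m ≤ 4 → ((t + (m : ZMod n)) ∈ T ∧
        ∀ i : ℕ, i ≤ j' + 1 → t + (m : ZMod n) ≠ a + (i : ZMod n) - 1) := by
      intro m hm
      induction m with
      | zero =>
        constructor
        · simpa using ht
        · intro i hi hcon
          rcases Nat.eq_zero_or_pos i with hi0 | hipos
          · subst hi0
            apply ha1
            rw [show a - 1 = t + ((0 : ℕ) : ZMod n) from by
              push_cast at hcon ⊢
              first | linear_combination hcon | linear_combination -hcon]
            simpa using ht
          · refine htout (i - 1) (by omega) ?_
            rw [show a + ((i - 1 : ℕ) : ZMod n) = a + (i : ZMod n) - 1 from by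
              push_cast [Nat.cast_sub hipos]; ring]
            rw [← hcon]
            push_cast
            ring
      | succ m ihm =>
        obtain ⟨hmT, hguard⟩ := ihm (by omega)
        have hTnext : t + ((m + 1 : ℕ) : ZMod n) ∈ T := by
          have h1 : t + (m : ZMod n) + 1 ≠ a := by
            intro hcon
            refine hguard 0 (by omega) ?_
            push_cast
            linear_combination hcon
          have h2 : t + (m : ZMod n) + 1 ≠ c := by
            intro hcon
            refine hguard (j' + 1) (by omega) ?_
            rw [hc] at hcon
            push_cast
            push_cast at hcon
            linear_combination hcon
          have := step _ hmT h1 h2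
          rw [show t + ((m + 1 : ℕ) : ZMod n) = t + (m : ZMod n) + 1 from by push_cast; ring]
          exact this
        refine ⟨hTnext, ?_⟩
        intro i hi hcon
        rcases Nat.eq_zero_or_pos i with hi0 | hipos
        · subst hi0
          apply ha1
          rw [show a - 1 = t + ((m + 1 : ℕ) : ZMod n) from by
            push_cast at hcon ⊢
            first | linear_combination hcon | linear_combination -hcon]
          exact hTnext
        · refine hguard (i - 1) (by omega) ?_
          have : ((i : ℕ) : ZMod n) = ((i - 1 : ℕ) : ZMod n) + 1 := by
            push_cast [Nat.cast_sub hipos]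
            ring
          rw [this] at hcon
          push_cast at hcon ⊢
          linear_combination hcon
    -- now T contains 5 distinct elements
    have hsub5 : ({t, t + ((1 : ℕ) : ZMod n), t + ((2 : ℕ) : ZMod n), t + ((3 : ℕ) : ZMod n),
        t + ((4 : ℕ) : ZMod n)} : Set (ZMod n)) ⊆ T := by
      intro x hx
      rcases hx with rfl | rfl | rfl | rfl | rfl
      · simpa using (claim 0 (by omega)).1
      · exact (claim 1 (by omega)).1
      · exact (claim 2 (by omega)).1
      · exact (claim 3 (by omega)).1
      · exact (claim 4 (by omega)).1
    have h5 : ({t, t + ((1 : ℕ) : ZMod n), t + ((2 : ℕ) : ZMod n), t + ((3 : ℕ) : ZMod n),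
        t + ((4 : ℕ) : ZMod n)} : Set (ZMod n)).ncard = 5 := by
      have d01 := hzne t 0 1 (by omega) (by omega) (by omega)
      have d02 := hzne t 0 2 (by omega) (by omega) (by omega)
      have d03 := hzne t 0 3 (by omega) (by omega) (by omega)
      have d04 := hzne t 0 4 (by omega) (by omega) (by omega)
      have d12 := hzne t 1 2 (by omega) (by omega) (by omega)
      have d13 := hzne t 1 3 (by omega) (by omega) (by omega)
      have d14 := hzne t 1 4 (by omega) (by omega) (by omega)
      have d23 := hzne t 2 3 (by omega) (by omega) (by omega)
      have d24 := hzne t 2 4 (by omega) (by omega) (by omega)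
      have d34 := hzne t 3 4 (by omega) (by omega) (by omega)
      have e1 := (hzne0 t 1 (by omega) (by omega)).symm
      have e2 := (hzne0 t 2 (by omega) (by omega)).symm
      have e3 := (hzne0 t 3 (by omega) (by omega)).symm
      have e4 := (hzne0 t 4 (by omega) (by omega)).symm
      rw [Set.ncard_insert_of_notMem (by simp [e1, e2, e3, e4, g10, g20, g30, g40]),
        Set.ncard_insert_of_notMem (by simp [d12, d13, d14, g12, g13, g14]),
        Set.ncard_insert_of_notMem (by simp [d23, d24, g23, g24]),
        Set.ncard_pair d34]
    have := Set.ncard_le_ncard hsub5 (Set.toFinite T)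
    rw [h5, hT] at this
    omega
  -- assemble
  rcases build 3 (by omega) with hfull | ⟨j', hj', hc, hblock⟩
  · -- T = {a, a+1, a+2, a+3} and c = a + 4
    have hsub4 : ({a, a + ((1 : ℕ) : ZMod n), a + ((2 : ℕ) : ZMod n), a + ((3 : ℕ) : ZMod n)} :
        Set (ZMod n)) ⊆ T := by
      intro x hx
      rcases hx with rfl | rfl | rfl | rfl
      · simpa using hfull 0 (by omega)
      · exact hfull 1 (by omega)
      · exact hfull 2 (by omega)
      · exact hfull 3 (by omega)
    have d01 := hzne a 0 1 (by omega) (by omega) (by omega)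
    have d02 := hzne a 0 2 (by omega) (by omega) (by omega)
    have d03 := hzne a 0 3 (by omega) (by omega) (by omega)
    have d12 := hzne a 1 2 (by omega) (by omega) (by omega)
    have d13 := hzne a 1 3 (by omega) (by omega) (by omega)
    have d23 := hzne a 2 3 (by omega) (by omega) (by omega)
    have h4 : ({a, a + ((1 : ℕ) : ZMod n), a + ((2 : ℕ) : ZMod n), a + ((3 : ℕ) : ZMod n)} :
        Set (ZMod n)).ncard = 4 := by
      have e1 := (hzne0 a 1 (by omega) (by omega)).symm
      have e2 := (hzne0 a 2 (by omega) (by omega)).symm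
      have e3 := (hzne0 a 3 (by omega) (by omega)).symm
      rw [Set.ncard_insert_of_notMem (by simp [e1, e2, e3, g10, g20, g30]),
        Set.ncard_insert_of_notMem (by simp [d12, d13, g12, g13]),
        Set.ncard_pair d23]
    have hTeq : T = {a, a + ((1 : ℕ) : ZMod n), a + ((2 : ℕ) : ZMod n),
        a + ((3 : ℕ) : ZMod n)} :=
      (Set.eq_of_subset_of_ncard_le hsub4 (by rw [hT, h4]) (Set.toFinite T)).symm
    -- evaluate the degree condition at a + 4
    have hnotT : a + (4 : ZMod n) ∉ T := by
      rw [hTeq]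
      have d40 := hzne a 4 0 (by omega) (by omega) (by omega)
      have d41 := hzne a 4 1 (by omega) (by omega) (by omega)
      have d42 := hzne a 4 2 (by omega) (by omega) (by omega)
      have d43 := hzne a 4 3 (by omega) (by omega) (by omega)
      have : a + (4 : ZMod n) = a + ((4 : ℕ) : ZMod n) := by push_cast; ring
      rw [this]
      have e4 := hzne0 a 4 (by omega) (by omega)
      simp [e4, d41, d42, d43, g40, g41, g42, g43]
    have hprevT : a + (4 : ZMod n) - 1 ∈ T := by
      rw [show a + (4 : ZMod n) - 1 = a + ((3 : ℕ) : ZMod n) from by push_cast; ring]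
      exact hfull 3 (by omega)
    have hne_a : a + (4 : ZMod n) ≠ a := by
      have := hzne a 4 0 (by omega) (by omega) (by omega)
      intro hcon
      apply this
      push_cast
      linear_combination hcon
    by_contra hnc
    have hnc' : a + (4 : ZMod n) ≠ c := fun h => hnc h.symm
    rcases H (a + (4 : ZMod n)) with h | h <;>
      simp [hnotT, hprevT, hne_a, hnc'] at h
  · rcases Nat.lt_or_ge j' 3 with hlt | hge
    · exact absurd (orphan j' (by omega) hc hblock) (by simp)
    · have hj3 : j' = 3 := by omega
      subst hj3
      rw [hc]
      push_cast
      ring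

open scoped Classical in
lemma arc [NeZero n] (hn : 80 < n) (T : Set (ZMod n)) (a c : ZMod n)
    (hT : T.ncard = 4) (hac : a ≠ c)
    (H : ∀ x : ZMod n,
      (if x ∈ T then 1 else 0) + (if x - 1 ∈ T then 1 else 0) +
        (if x = a ∨ x = c then 1 else 0) = 0 ∨
      (if x ∈ T then 1 else 0) + (if x - 1 ∈ T then 1 else 0) +
        (if x = a ∨ x = c then 1 else 0) = 2) :
    c = a + 4 ∨ c = a - 4 := by
  -- at a, exactly one of a, a-1 is in T
  have hone : (a ∈ T ∧ a - 1 ∉ T) ∨ (a ∉ T ∧ a - 1 ∈ T) := by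
    have h := H a
    rw [if_pos (Or.inl rfl)] at h
    by_cases h1 : a ∈ T <;> by_cases h2 : a - 1 ∈ T <;> simp [h1, h2] at h <;> tauto
  rcases hone with ⟨ha, ha1⟩ | ⟨ha, ha1⟩
  · exact Or.inl (arc_oneside hn T a c hT hac H ha ha1)
  · -- mirror through x ↦ -x - 1
    right
    set T' : Set (ZMod n) := (fun x : ZMod n => -x - 1) '' T with hT'
    have hmemT' : ∀ x : ZMod n, x ∈ T' ↔ -x - 1 ∈ T := by
      intro x
      constructor
      · rintro ⟨y, hy, rfl⟩
        simpa [neg_sub] using (show - (-y - 1) - 1 ∈ T from by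
          rw [show -(-y - 1) - 1 = y from by ring]; exact hy)
      · intro hx
        exact ⟨-x - 1, hx, by ring⟩
    have hT'card : T'.ncard = 4 := by
      rw [hT', Set.ncard_image_of_injective _ (fun x y hxy => by
        have : -x - 1 = -y - 1 := hxy
        linear_combination -this), hT]
    have hac' : -a ≠ -c := fun h => hac (by linear_combination -h)
    have H' : ∀ x : ZMod n,
        (if x ∈ T' then 1 else 0) + (if x - 1 ∈ T' then 1 else 0) +
          (if x = -a ∨ x = -c then 1 else 0) = 0 ∨
        (if x ∈ T' then 1 else 0) + (if x - 1 ∈ T' then 1 else 0) +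
          (if x = -a ∨ x = -c then 1 else 0) = 2 := by
      intro x
      have h := H (-x)
      have e1 : (x ∈ T') ↔ (-x - 1 ∈ T) := hmemT' x
      have e2 : (x - 1 ∈ T') ↔ (-x ∈ T) := by
        rw [hmemT' (x - 1)]
        constructor
        · intro h'; rw [show -x = -(x-1) - 1 from by ring]; exact h'
        · intro h'; rw [show -(x-1) - 1 = -x from by ring]; exact h'
      have e3 : (x = -a ∨ x = -c) ↔ (-x = a ∨ -x = c) := by
        constructor
        · rintro (rfl | rfl) <;> simp
        · rintro (h' | h')
          · left; linear_combination -h'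
          · right; linear_combination -h'
      rw [if_congr e1 rfl rfl, if_congr e2 rfl rfl, if_congr e3 rfl rfl]
      have swap : ∀ p q r : ℕ, p + q + r = q + p + r := fun p q r => by ring
      rcases h with h | h
      · left; rw [swap]; exact h
      · right; rw [swap]; exact h
    have ha' : -a ∈ T' := by
      rw [hmemT']
      rw [show -(-a) - 1 = a - 1 from by ring]
      exact ha1
    have ha1' : -a - 1 ∉ T' := by
      rw [hmemT']
      rw [show -(-a - 1) - 1 = a from by ring]
      exact ha
    have := arc_oneside hn T' (-a) (-c) hT'card hac' H' ha' ha1'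
    linear_combination -this

end Arc

section Forward
variable {n k : ℕ}

open scoped Classical in
lemma forward_dir (n k : ℕ) (hn : 80 < n) (hk1 : 1 ≤ k) (hk2 : 2 * k < n)
    (C : (GP n k).Subgraph) (hcyc : IsNCycle 8 C)
    (hout : (C.edgeSet ∩ outerEdges n).ncard = 4)
    (hspoke : (C.edgeSet ∩ spokeEdges n).ncard = 2)
    (hinner : (C.edgeSet ∩ innerEdges n k).ncard = 2) :
    k = 2 ∨ (2 ∣ n ∧ k = (n - 4) / 2) := by
  haveI : NeZero n := ⟨by omega⟩
  obtain ⟨hv8, he8, hconn, hdeg⟩ := hcyc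
  have hinj : ∀ i j : ℕ, i < n → j < n → (i : ZMod n) = (j : ZMod n) → i = j :=
    fun i j hi hj h => zmod_cast_inj (by omega) hi hj h
  have hk0 : (k : ZMod n) ≠ 0 := by
    intro h
    rw [ZMod.natCast_eq_zero_iff] at h
    have := Nat.le_of_dvd (by omega) h
    omega
  have h2k0 : (k : ZMod n) + (k : ZMod n) ≠ 0 := by
    intro h
    have h' : ((2 * k : ℕ) : ZMod n) = 0 := by push_cast; linear_combination h
    rw [ZMod.natCast_eq_zero_iff] at h'
    have := Nat.le_of_dvd (by omega) h'
    omega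
  have h20 : (1 : ZMod n) + 1 ≠ 0 := by
    intro h
    have h' : ((2 : ℕ) : ZMod n) = ((0 : ℕ) : ZMod n) := by push_cast; linear_combination h
    have := hinj 2 0 (by omega) (by omega) h'
    omega
  set T : Set (ZMod n) := {i : ZMod n | s(Sum.inl i, Sum.inl (i + 1)) ∈ C.edgeSet} with hTdef
  set S : Set (ZMod n) := {i : ZMod n | s(Sum.inl i, Sum.inr i) ∈ C.edgeSet} with hSdef
  set I : Set (ZMod n) :=
    {i : ZMod n | s(Sum.inr i, Sum.inr (i + (k : ZMod n))) ∈ C.edgeSet} with hIdef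
  -- cardinalities
  have hTcard : T.ncard = 4 := by
    have hfi : Function.Injective
        (fun i : ZMod n => (s(Sum.inl i, Sum.inl (i + 1)) : Sym2 (ZMod n ⊕ ZMod n))) := by
      intro i j hij
      simp only [Sym2.eq_iff, Sum.inl.injEq] at hij
      rcases hij with ⟨h1, _⟩ | ⟨h1, h2⟩
      · exact h1
      · exfalso; exact h20 (by first | linear_combination h1 - h2 | linear_combination h2 - h1)
    have himg : (fun i : ZMod n => (s(Sum.inl i, Sum.inl (i + 1)) : Sym2 (ZMod n ⊕ ZMod n))) '' T =
        C.edgeSet ∩ outerEdges n := by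
      ext e
      constructor
      · rintro ⟨i, hi, rfl⟩
        exact ⟨hi, ⟨i, rfl⟩⟩
      · rintro ⟨he, i, rfl⟩
        exact ⟨i, he, rfl⟩
    rw [← hout, ← himg, Set.ncard_image_of_injective _ hfi]
  have hScard : S.ncard = 2 := by
    have hfi : Function.Injective
        (fun i : ZMod n => (s(Sum.inl i, Sum.inr i) : Sym2 (ZMod n ⊕ ZMod n))) := by
      intro i j hij
      simp only [Sym2.eq_iff, Sum.inl.injEq] at hij
      tauto
    have himg : (fun i : ZMod n => (s(Sum.inl i, Sum.inr i) : Sym2 (ZMod n ⊕ ZMod n))) '' S =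
        C.edgeSet ∩ spokeEdges n := by
      ext e
      constructor
      · rintro ⟨i, hi, rfl⟩
        exact ⟨hi, ⟨i, rfl⟩⟩
      · rintro ⟨he, i, rfl⟩
        exact ⟨i, he, rfl⟩
    rw [← hspoke, ← himg, Set.ncard_image_of_injective _ hfi]
  have hIcard : I.ncard = 2 := by
    have hfi : Function.Injective
        (fun i : ZMod n => (s(Sum.inr i, Sum.inr (i + (k : ZMod n))) : Sym2 (ZMod n ⊕ ZMod n))) := by
      intro i j hij
      simp only [Sym2.eq_iff, Sum.inr.injEq] at hij
      rcases hij with ⟨h1, _⟩ | ⟨h1, h2⟩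
      · exact h1
      · exfalso; exact h2k0 (by first | linear_combination h1 - h2 | linear_combination h2 - h1)
    have himg : (fun i : ZMod n =>
        (s(Sum.inr i, Sum.inr (i + (k : ZMod n))) : Sym2 (ZMod n ⊕ ZMod n))) '' I =
        C.edgeSet ∩ innerEdges n k := by
      ext e
      constructor
      · rintro ⟨i, hi, rfl⟩
        exact ⟨hi, ⟨i, rfl⟩⟩
      · rintro ⟨he, i, rfl⟩
        exact ⟨i, he, rfl⟩
    rw [← hinner, ← himg, Set.ncard_image_of_injective _ hfi]
  -- degree equation on the outer rim
  have hdegL : ∀ x : ZMod n,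
      (if x ∈ T then 1 else 0) + (if x - 1 ∈ T then 1 else 0) + (if x ∈ S then 1 else 0) = 0 ∨
      (if x ∈ T then 1 else 0) + (if x - 1 ∈ T then 1 else 0) + (if x ∈ S then 1 else 0) = 2 := by
    intro x
    have c1 : Sum.inl (x + 1) ∈ C.neighborSet (Sum.inl x) ↔ x ∈ T := by
      rw [Subgraph.mem_neighborSet, hTdef, Set.mem_setOf_eq, Subgraph.mem_edgeSet]
    have c2 : Sum.inl (x - 1) ∈ C.neighborSet (Sum.inl x) ↔ x - 1 ∈ T := by
      rw [Subgraph.mem_neighborSet, hTdef, Set.mem_setOf_eq, Subgraph.mem_edgeSet,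
        show x - 1 + 1 = x from by ring]
      constructor
      · exact fun h => h.symm
      · exact fun h => h.symm
    have c3 : Sum.inr x ∈ C.neighborSet (Sum.inl x) ↔ x ∈ S := by
      rw [Subgraph.mem_neighborSet, hSdef, Set.mem_setOf_eq, Subgraph.mem_edgeSet]
    by_cases hx : Sum.inl x ∈ C.verts
    · right
      have h2 := hdeg _ hx
      have hsub : C.neighborSet (Sum.inl x) ⊆
          {Sum.inl (x + 1), Sum.inl (x - 1), Sum.inr x} := by
        intro w hw
        rw [Subgraph.mem_neighborSet] at hw
        have hG := C.adj_sub hw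
        match w with
        | Sum.inl y =>
          rcases (gp_adj_inl_inl.mp hG).2 with h | h
          · rw [h]; simp
          · rw [show y = x - 1 from by first | linear_combination h | linear_combination -h]
            simp
        | Sum.inr y =>
          rw [gp_adj_inl_inr.mp hG]
          simp
      have d1 : (Sum.inl (x + 1) : ZMod n ⊕ ZMod n) ≠ Sum.inl (x - 1) := by
        simp only [ne_eq, Sum.inl.injEq]
        intro h
        exact h20 (by linear_combination h)
      have htri := ncard_subset_triple d1 (by simp) (by simp) hsub
      rw [h2] at htri
      rw [c1, c2, c3] at htri
      omega
    · left
      have e1 : x ∉ T := by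
        intro hxT
        exact hx (Subgraph.Adj.fst_mem (Subgraph.mem_edgeSet.mp hxT))
      have e2 : x - 1 ∉ T := by
        intro hxT
        have := Subgraph.Adj.snd_mem (Subgraph.mem_edgeSet.mp hxT)
        rw [show x - 1 + 1 = x from by ring] at this
        exact hx this
      have e3 : x ∉ S := by
        intro hxS
        exact hx (Subgraph.Adj.fst_mem (Subgraph.mem_edgeSet.mp hxS))
      simp [e1, e2, e3]
  -- degree equation on the inner rim
  have hdegR : ∀ x : ZMod n,
      (if x ∈ S then 1 else 0) + (if x ∈ I then 1 else 0) +
        (if x - (k : ZMod n) ∈ I then 1 else 0) = 0 ∨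
      (if x ∈ S then 1 else 0) + (if x ∈ I then 1 else 0) +
        (if x - (k : ZMod n) ∈ I then 1 else 0) = 2 := by
    intro x
    have c1 : Sum.inl x ∈ C.neighborSet (Sum.inr x) ↔ x ∈ S := by
      rw [Subgraph.mem_neighborSet, hSdef, Set.mem_setOf_eq, Subgraph.mem_edgeSet]
      constructor
      · exact fun h => h.symm
      · exact fun h => h.symm
    have c2 : Sum.inr (x + (k : ZMod n)) ∈ C.neighborSet (Sum.inr x) ↔ x ∈ I := by
      rw [Subgraph.mem_neighborSet, hIdef, Set.mem_setOf_eq, Subgraph.mem_edgeSet]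
    have c3 : Sum.inr (x - (k : ZMod n)) ∈ C.neighborSet (Sum.inr x) ↔
        x - (k : ZMod n) ∈ I := by
      rw [Subgraph.mem_neighborSet, hIdef, Set.mem_setOf_eq, Subgraph.mem_edgeSet,
        show x - (k : ZMod n) + (k : ZMod n) = x from by ring]
      constructor
      · exact fun h => h.symm
      · exact fun h => h.symm
    by_cases hx : Sum.inr x ∈ C.verts
    · right
      have h2 := hdeg _ hx
      have hsub : C.neighborSet (Sum.inr x) ⊆
          {Sum.inl x, Sum.inr (x + (k : ZMod n)), Sum.inr (x - (k : ZMod n))} := by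
        intro w hw
        rw [Subgraph.mem_neighborSet] at hw
        have hG := C.adj_sub hw
        match w with
        | Sum.inl y =>
          rw [gp_adj_inr_inl.mp hG]
          simp
        | Sum.inr y =>
          rcases (gp_adj_inr_inr.mp hG).2 with h | h
          · rw [h]; simp
          · rw [show y = x - (k : ZMod n) from by
              first | linear_combination h | linear_combination -h]
            simp
      have d23 : (Sum.inr (x + (k : ZMod n)) : ZMod n ⊕ ZMod n) ≠
          Sum.inr (x - (k : ZMod n)) := by
        simp only [ne_eq, Sum.inr.injEq]
        intro h
        exact h2k0 (by linear_combination h)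
      have htri := ncard_subset_triple (by simp) (by simp) d23 hsub
      rw [h2] at htri
      rw [c1, c2, c3] at htri
      omega
    · left
      have e1 : x ∉ S := by
        intro hxS
        exact hx (Subgraph.Adj.snd_mem (Subgraph.mem_edgeSet.mp hxS))
      have e2 : x ∉ I := by
        intro hxT
        exact hx (Subgraph.Adj.fst_mem (Subgraph.mem_edgeSet.mp hxT))
      have e3 : x - (k : ZMod n) ∉ I := by
        intro hxT
        have := Subgraph.Adj.snd_mem (Subgraph.mem_edgeSet.mp hxT)
        rw [show x - (k : ZMod n) + (k : ZMod n) = x from by ring] at this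
        exact hx this
      simp [e1, e2, e3]
  -- structure of the inner part
  obtain ⟨b, hSeq⟩ := inner_struct (k : ZMod n) hk0 h2k0 S I hScard hIcard hdegR
  -- apply the arc lemma
  have hac : b ≠ b + (k : ZMod n) + (k : ZMod n) := by
    intro h
    exact h2k0 (by linear_combination -h)
  have H' : ∀ x : ZMod n,
      (if x ∈ T then 1 else 0) + (if x - 1 ∈ T then 1 else 0) +
        (if x = b ∨ x = b + (k : ZMod n) + (k : ZMod n) then 1 else 0) = 0 ∨
      (if x ∈ T then 1 else 0) + (if x - 1 ∈ T then 1 else 0) +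
        (if x = b ∨ x = b + (k : ZMod n) + (k : ZMod n) then 1 else 0) = 2 := by
    intro x
    have h := hdegL x
    have e : (x ∈ S) ↔ (x = b ∨ x = b + (k : ZMod n) + (k : ZMod n)) := by
      rw [hSeq]
      simp [Set.mem_insert_iff]
    rw [if_congr e rfl rfl] at h
    exact h
  rcases arc hn T b (b + (k : ZMod n) + (k : ZMod n)) hTcard hac H' with h | h
  · -- 2k ≡ 4
    left
    have h' : ((2 * k : ℕ) : ZMod n) = ((4 : ℕ) : ZMod n) := by
      push_cast
      linear_combination h
    have := hinj (2 * k) 4 (by omega) (by omega) h'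
    omega
  · -- 2k ≡ -4
    right
    have hc4 : ((n - 4 : ℕ) : ZMod n) = -4 := by
      rw [Nat.cast_sub (by omega : 4 ≤ n), ZMod.natCast_self]
      push_cast
      ring
    have h' : ((2 * k : ℕ) : ZMod n) = ((n - 4 : ℕ) : ZMod n) := by
      rw [hc4]
      push_cast
      linear_combination h
    have := hinj (2 * k) (n - 4) (by omega) (by omega) h'
    omega

end Forward



theorem gp_C4_iff (n k : ℕ) (hn : 80 < n) (hk1 : 1 ≤ k) (hk2 : 2 * k < n) :
    (∃ C : (GP n k).Subgraph, IsNCycle 8 C ∧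
        (C.edgeSet ∩ outerEdges n).ncard = 4 ∧
        (C.edgeSet ∩ spokeEdges n).ncard = 2 ∧
        (C.edgeSet ∩ innerEdges n k).ncard = 2) ↔
      (k = 2 ∨ (2 ∣ n ∧ k = (n - 4) / 2)) := by
  haveI : NeZero n := ⟨by omega⟩
  constructor
  · rintro ⟨C, hcyc, h1, h2, h3⟩
    exact forward_dir n k hn hk1 hk2 C hcyc h1 h2 h3
  · rintro (rfl | ⟨hdvd, rfl⟩)
    · -- k = 2
      refine backward_aux n 2 hn hk1 hk2 (2 : ZMod n) ?_ ?_ ?_ ?_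
      · simpa using zmod_cast_ne (n := n) (by omega) (by omega) (by omega) (by omega : (2:ℕ) ≠ 0)
      · simpa using zmod_cast_ne (n := n) (by omega) (by omega) (by omega) (by omega : (2:ℕ) ≠ 4)
      · exact ⟨0, by norm_num⟩
      · exact ⟨2, by push_cast; norm_num⟩
    · -- k = (n-4)/2
      set k := (n - 4) / 2 with hk
      have h2k : 2 * k = n - 4 := by omega
      have hcast4 : ((n - 4 : ℕ) : ZMod n) = -4 := by
        rw [Nat.cast_sub (by omega : 4 ≤ n), ZMod.natCast_self]
        push_cast
        ring
      have hkk : (k : ZMod n) + (k : ZMod n) = -4 := by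
        rw [← Nat.cast_add, ← two_mul, h2k, hcast4]
      refine backward_aux n k hn hk1 hk2 (4 + (k : ZMod n)) ?_ ?_ ?_ ?_
      · intro hcon
        have hkneg : (k : ZMod n) = ((n - 4 : ℕ) : ZMod n) := by
          rw [hcast4]
          linear_combination hcon
        have := zmod_cast_inj (n := n) (by omega) (by omega) (by omega) hkneg
        omega
      · intro hcon
        have hk0 : (k : ZMod n) = ((0 : ℕ) : ZMod n) := by
          push_cast
          linear_combination hcon
        have := zmod_cast_inj (n := n) (by omega) (by omega) (by omega) hk0
        omega
      · refine ⟨4 + (k : ZMod n), ?_⟩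
        have : (4 + (k : ZMod n)) + (k : ZMod n) = 0 := by
          rw [add_assoc, hkk]
          ring
        rw [this, Sym2.eq_swap]
      · exact ⟨4, by rw [Sym2.eq_swap]⟩
end

section
/- For n > 80 and 1 ≤ k < n/2, at most one of the following conditions holds: (a) 8k ∈ {n, 3n}; (b) 5k ≡ ±1 (mod n); (c) 4k ≡ ±2 (mod n); (d) 3k ≡ ±3 (mod n); (e) 2k ≡ ±4 (mod n); (f) k = 5; (g) n = 2k+2. -/
open SimpleGraph

lemma negCase (n a b : ℕ) [NeZero n] (h : (a : ZMod n) = -(b : ZMod n)) : n ∣ (a + b) := by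
  have : ((a + b : ℕ) : ZMod n) = 0 := by push_cast; rw [h]; ring
  exact (ZMod.natCast_eq_zero_iff _ _).mp this

lemma posCase (n a b : ℕ) (hba : b ≤ a) (h : (a : ZMod n) = (b : ZMod n)) : n ∣ (a - b) := by
  have := (ZMod.natCast_eq_natCast_iff _ _ _).mp h
  exact (Nat.modEq_iff_dvd' hba).mp this.symm

lemma smallDvd (n a : ℕ) (h : n ∣ a) (h1 : 0 < a) (h2 : a < 3*n) : a = n ∨ a = 2*n := by
  obtain ⟨m, rfl⟩ := h
  rcases m with _|_|_|m
  · omega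
  · omega
  · omega
  · have : n * 3 ≤ n * (m+1+1+1) := Nat.mul_le_mul_left _ (by omega)
    omega

section
variable (n k : ℕ) (hn : 80 < n) (hk1 : 1 ≤ k) (hk2 : 2 * k < n)
include hn hk1 hk2

lemma L1 (h : ((5 * k : ℕ) : ZMod n) = 1 ∨ ((5 * k : ℕ) : ZMod n) = -1) :
    5*k+1 = n ∨ 5*k+1 = 2*n ∨ 5*k = n+1 ∨ 5*k = 2*n+1 := by
  have : NeZero n := ⟨by omega⟩
  rcases h with h | h
  · have h1 : ((5*k : ℕ) : ZMod n) = ((1:ℕ) : ZMod n) := by exact_mod_cast h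
    have := posCase n (5*k) 1 (by omega) h1
    have := smallDvd n (5*k-1) this (by omega) (by omega)
    omega
  · have h1 : ((5*k : ℕ) : ZMod n) = -((1:ℕ) : ZMod n) := by exact_mod_cast h
    have := negCase n (5*k) 1 h1
    have := smallDvd n (5*k+1) this (by omega) (by omega)
    omega

lemma L2 (h : ((4 * k : ℕ) : ZMod n) = 2 ∨ ((4 * k : ℕ) : ZMod n) = -2) :
    4*k+2 = n ∨ 4*k = n+2 ∨ 2*k+1 = n := by
  have : NeZero n := ⟨by omega⟩
  rcases h with h | h
  · have h1 : ((4*k : ℕ) : ZMod n) = ((2:ℕ) : ZMod n) := by exact_mod_cast h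
    have := posCase n (4*k) 2 (by omega) h1
    have := smallDvd n (4*k-2) this (by omega) (by omega)
    omega
  · have h1 : ((4*k : ℕ) : ZMod n) = -((2:ℕ) : ZMod n) := by exact_mod_cast h
    have := negCase n (4*k) 2 h1
    have := smallDvd n (4*k+2) this (by omega) (by omega)
    omega

lemma L3 (h : ((3 * k : ℕ) : ZMod n) = 3 ∨ ((3 * k : ℕ) : ZMod n) = -3) :
    k = 1 ∨ 3*k = n+3 ∨ 3*k+3 = n := by
  have : NeZero n := ⟨by omega⟩
  rcases h with h | h
  · have h1 : ((3*k : ℕ) : ZMod n) = ((3:ℕ) : ZMod n) := by exact_mod_cast h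
    have := posCase n (3*k) 3 (by omega) h1
    rcases Nat.eq_zero_or_pos (3*k-3) with h0 | h0
    · omega
    · have := smallDvd n (3*k-3) this h0 (by omega)
      omega
  · have h1 : ((3*k : ℕ) : ZMod n) = -((3:ℕ) : ZMod n) := by exact_mod_cast h
    have := negCase n (3*k) 3 h1
    have := smallDvd n (3*k+3) this (by omega) (by omega)
    omega

lemma L4 (h : ((2 * k : ℕ) : ZMod n) = 4 ∨ ((2 * k : ℕ) : ZMod n) = -4) :
    k = 2 ∨ 2*k+4 = n := by
  have : NeZero n := ⟨by omega⟩
  rcases h with h | h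
  · rcases le_or_gt 4 (2*k) with h4 | h4
    · have h1 : ((2*k : ℕ) : ZMod n) = ((4:ℕ) : ZMod n) := by exact_mod_cast h
      have := posCase n (2*k) 4 h4 h1
      rcases Nat.eq_zero_or_pos (2*k-4) with h0 | h0
      · omega
      · have := smallDvd n (2*k-4) this h0 (by omega)
        omega
    · have h1 : ((4:ℕ) : ZMod n) = ((2*k : ℕ) : ZMod n) := by exact_mod_cast h.symm
      have := posCase n 4 (2*k) (by omega) h1
      have : n ≤ 4 - 2*k := Nat.le_of_dvd (by omega) this
      omega
  · have h1 : ((2*k : ℕ) : ZMod n) = -((4:ℕ) : ZMod n) := by exact_mod_cast h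
    have := negCase n (2*k) 4 h1
    have := smallDvd n (2*k+4) this (by omega) (by omega)
    omega

end


theorem gp_conditions_at_most_one (n k : ℕ) (hn : 80 < n) (hk1 : 1 ≤ k) (hk2 : 2 * k < n) :
    {i : Fin 7 | ![8 * k = n ∨ 8 * k = 3 * n,
        ((5 * k : ℕ) : ZMod n) = 1 ∨ ((5 * k : ℕ) : ZMod n) = -1,
        ((4 * k : ℕ) : ZMod n) = 2 ∨ ((4 * k : ℕ) : ZMod n) = -2,
        ((3 * k : ℕ) : ZMod n) = 3 ∨ ((3 * k : ℕ) : ZMod n) = -3,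
        ((2 * k : ℕ) : ZMod n) = 4 ∨ ((2 * k : ℕ) : ZMod n) = -4,
        k = 5,
        n = 2 * k + 2] i}.Subsingleton := by
  intro i hi j hj
  simp only [Set.mem_setOf_eq] at hi hj
  fin_cases i <;> fin_cases j <;>
    first
    | rfl
    | (exfalso
       try replace hi : 8 * k = n ∨ 8 * k = 3 * n := hi
       try replace hi : ((5 * k : ℕ) : ZMod n) = 1 ∨ ((5 * k : ℕ) : ZMod n) = -1 := hi
       try replace hi : ((4 * k : ℕ) : ZMod n) = 2 ∨ ((4 * k : ℕ) : ZMod n) = -2 := hi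
       try replace hi : ((3 * k : ℕ) : ZMod n) = 3 ∨ ((3 * k : ℕ) : ZMod n) = -3 := hi
       try replace hi : ((2 * k : ℕ) : ZMod n) = 4 ∨ ((2 * k : ℕ) : ZMod n) = -4 := hi
       try replace hi : k = 5 := hi
       try replace hi : n = 2 * k + 2 := hi
       try replace hj : 8 * k = n ∨ 8 * k = 3 * n := hj
       try replace hj : ((5 * k : ℕ) : ZMod n) = 1 ∨ ((5 * k : ℕ) : ZMod n) = -1 := hj
       try replace hj : ((4 * k : ℕ) : ZMod n) = 2 ∨ ((4 * k : ℕ) : ZMod n) = -2 := hj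
       try replace hj : ((3 * k : ℕ) : ZMod n) = 3 ∨ ((3 * k : ℕ) : ZMod n) = -3 := hj
       try replace hj : ((2 * k : ℕ) : ZMod n) = 4 ∨ ((2 * k : ℕ) : ZMod n) = -4 := hj
       try replace hj : k = 5 := hj
       try replace hj : n = 2 * k + 2 := hj
       try replace hi := L1 n k hn hk1 hk2 hi
       try replace hi := L2 n k hn hk1 hk2 hi
       try replace hi := L3 n k hn hk1 hk2 hi
       try replace hi := L4 n k hn hk1 hk2 hi
       try replace hj := L1 n k hn hk1 hk2 hj
       try replace hj := L2 n k hn hk1 hk2 hj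
       try replace hj := L3 n k hn hk1 hk2 hj
       try replace hj := L4 n k hn hk1 hk2 hj
       omega)
end
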